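/- For every α ∈ 𝒟𝒮, the set K_α is ℋ-visible: there exists h ∈ ℋ with 0 < μ^h(K_α) < ∞. -/

import Mathlib

set_option linter.unusedSectionVars false
set_option maxHeartbeats 2000000


open Set Filter Topology TopologicalSpace ENNReal MeasureTheory

/-- The set `D` of dyadic rationals in `(0,1)`. -/
def dyadics : Set ℝ :=
  {x : ℝ | ∃ i k : ℕ, 0 < i ∧ 0 < k ∧ i < 2 ^ k ∧ x = (i : ℝ) / 2 ^ k}

/-- `φ ∈ 𝒢`: a "gap function", i.e. `φ : D → (0,1)` with `∑_{d ∈ D} φ d = 1`. -/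
def IsGapFun (φ : ℝ → ℝ) : Prop :=
  (∀ d ∈ dyadics, φ d ∈ Set.Ioo (0 : ℝ) 1) ∧ HasSum (fun d : dyadics => φ d) 1

/-- `Φ(d) = ∑_{d' ∈ D, d' < d} φ(d')`. -/
noncomputable def PhiFun (φ : ℝ → ℝ) (d : ℝ) : ℝ :=
  ∑' d' : ↥(dyadics ∩ Set.Iio d), φ d'

/-- `K_φ = [0,1] \ ⋃_{d ∈ D} (Φ(d), Φ(d) + φ(d))`. -/
noncomputable def Kset (φ : ℝ → ℝ) : Set ℝ :=
  Set.Icc 0 1 \ ⋃ d ∈ dyadics, Set.Ioo (PhiFun φ d) (PhiFun φ d + φ d)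

/-- `α ∈ 𝒟𝒮`: a decreasing sequence of positive reals (indexed from 1) summing to 1. -/
def IsGapSeq (α : ℕ → ℝ) : Prop :=
  (∀ i, 1 ≤ i → 0 < α i) ∧ (∀ i j, 1 ≤ i → i ≤ j → α j ≤ α i) ∧
    HasSum (fun i : ℕ => α (i + 1)) 1

/-- `φ` is the gap function associated to the gap sequence `α`:
`φ((2s+1)/2^j) = α(2^(j-1) + s)` for `j ≥ 1`, `0 ≤ s < 2^(j-1)`. -/
def IsGapFunOf (α : ℕ → ℝ) (φ : ℝ → ℝ) : Prop :=
  ∀ j s : ℕ, 1 ≤ j → s < 2 ^ (j - 1) →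
    φ ((2 * (s : ℝ) + 1) / 2 ^ j) = α (2 ^ (j - 1) + s)

/-- The generalized Hausdorff measure `μ^h` on `ℝ` with gauge `h`. -/
noncomputable def hausdorffGaugeMeasure (h : ℝ → ℝ) : Measure ℝ :=
  Measure.mkMetric (fun d : ℝ≥0∞ => ENNReal.ofReal (h d.toReal))

namespace Stmt6

/-- the dyadic rational with index `n ≥ 1`. -/
noncomputable def eDy (n : ℕ) : ℝ :=
  (2 * ((n - 2 ^ Nat.log 2 n : ℕ) : ℝ) + 1) / 2 ^ (Nat.log 2 n + 1)

lemma eDy_of (j s : ℕ) (hs : s < 2 ^ j) :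
    eDy (2 ^ j + s) = (2 * (s : ℝ) + 1) / 2 ^ (j + 1) := by
  have hlog : Nat.log 2 (2 ^ j + s) = j :=
    Nat.log_eq_of_pow_le_of_lt_pow (Nat.le_add_right _ _)
      (by have h : (2:ℕ) ^ (j + 1) = 2 * 2 ^ j := by ring
          omega)
  unfold eDy
  rw [hlog]
  congr 3
  push_cast [Nat.add_sub_cancel_left]
  ring

lemma decomp (n : ℕ) (hn : 1 ≤ n) :
    ∃ j s : ℕ, s < 2 ^ j ∧ n = 2 ^ j + s := by
  refine ⟨Nat.log 2 n, n - 2 ^ Nat.log 2 n, ?_, ?_⟩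
  · have h1 := Nat.pow_log_le_self 2 (by omega : n ≠ 0)
    have h2 := Nat.lt_pow_succ_log_self (by norm_num : 1 < 2) n
    have : 2 ^ (Nat.log 2 n + 1) = 2 * 2 ^ Nat.log 2 n := by ring
    omega
  · have h1 := Nat.pow_log_le_self 2 (by omega : n ≠ 0)
    omega

lemma phi_eDy {α : ℕ → ℝ} {φ : ℝ → ℝ} (hφα : IsGapFunOf α φ) {n : ℕ} (hn : 1 ≤ n) :
    φ (eDy n) = α n := by
  obtain ⟨j, s, hs, rfl⟩ := decomp n hn
  rw [eDy_of j s hs]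
  have := hφα (j + 1) s (by omega) (by simpa using hs)
  simpa using this

lemma eDy_pos {n : ℕ} (hn : 1 ≤ n) : 0 < eDy n := by
  obtain ⟨j, s, hs, rfl⟩ := decomp n hn
  rw [eDy_of j s hs]
  positivity

lemma eDy_lt_one {n : ℕ} (hn : 1 ≤ n) : eDy n < 1 := by
  obtain ⟨j, s, hs, rfl⟩ := decomp n hn
  rw [eDy_of j s hs]
  rw [div_lt_one (by positivity)]
  have : (s : ℝ) ≤ 2 ^ j - 1 := by
    have : (s : ℝ) + 1 ≤ 2 ^ j := by exact_mod_cast hs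
    linarith
  have h2 : (2:ℝ) ^ (j+1) = 2 * 2 ^ j := by ring
  linarith

lemma eDy_mem_dyadics {n : ℕ} (hn : 1 ≤ n) : eDy n ∈ dyadics := by
  obtain ⟨j, s, hs, rfl⟩ := decomp n hn
  rw [eDy_of j s hs]
  refine ⟨2 * s + 1, j + 1, by omega, by omega, ?_, by push_cast; ring_nf⟩
  have h : (2:ℕ) ^ (j + 1) = 2 * 2 ^ j := by ring
  omega

lemma eDy_inj : ∀ {m n : ℕ}, 1 ≤ m → 1 ≤ n → eDy m = eDy n → m = n := by
  have key : ∀ j s k r : ℕ, s < 2 ^ j → r < 2 ^ k → j ≤ k →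
      (2 * (s : ℝ) + 1) / 2 ^ (j + 1) = (2 * (r : ℝ) + 1) / 2 ^ (k + 1) →
      j = k ∧ s = r := by
    intro j s k r hs hr hjk heq
    have h1 : ((2 * s + 1) * 2 ^ (k + 1) : ℕ) = ((2 * r + 1) * 2 ^ (j + 1) : ℕ) := by
      have := heq
      field_simp at this
      exact_mod_cast this.trans (mul_comm _ _)
    have h2 : 2 ^ (k + 1) = 2 ^ (j + 1) * 2 ^ (k - j) := by
      rw [← pow_add]; congr 1; omega
    have h3 : (2 * s + 1) * 2 ^ (k - j) = 2 * r + 1 := by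
      have h1' : ((2 * s + 1) * 2 ^ (k - j)) * 2 ^ (j + 1) = (2 * r + 1) * 2 ^ (j + 1) := by
        calc ((2 * s + 1) * 2 ^ (k - j)) * 2 ^ (j + 1)
            = (2 * s + 1) * (2 ^ (j + 1) * 2 ^ (k - j)) := by ring
          _ = (2 * s + 1) * 2 ^ (k + 1) := by rw [← h2]
          _ = (2 * r + 1) * 2 ^ (j + 1) := h1
      exact Nat.eq_of_mul_eq_mul_right (pow_pos (by norm_num) _) h1' 
    rcases Nat.eq_zero_or_pos (k - j) with h | h
    · rw [h, pow_zero, mul_one] at h3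
      exact ⟨by omega, by omega⟩
    · exfalso
      have : 2 ∣ 2 ^ (k - j) := dvd_pow_self 2 (by omega)
      have : 2 ∣ (2 * s + 1) * 2 ^ (k - j) := Dvd.dvd.mul_left this _
      rw [h3] at this
      omega
  intro m n hm hn heq
  obtain ⟨j, s, hs, rfl⟩ := decomp m hm
  obtain ⟨k, r, hr, rfl⟩ := decomp n hn
  rw [eDy_of j s hs, eDy_of k r hr] at heq
  rcases le_total j k with h | h
  · obtain ⟨h1, h2⟩ := key j s k r hs hr h heq
    rw [h1, h2]
  · obtain ⟨h1, h2⟩ := key k r j s hr hs h heq.symm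
    rw [h1, h2]

lemma dyadics_surj : ∀ x ∈ dyadics, ∃ n, 1 ≤ n ∧ eDy n = x := by
  have key : ∀ k i : ℕ, 0 < i → i < 2 ^ k → ∃ n, 1 ≤ n ∧ eDy n = (i : ℝ) / 2 ^ k := by
    intro k
    induction k with
    | zero => intro i h1 h2; omega
    | succ k ih =>
      intro i h1 h2
      rcases Nat.even_or_odd i with ⟨i', rfl⟩ | ⟨s, rfl⟩
      · have hpow : (2:ℕ) ^ (k + 1) = 2 * 2 ^ k := by ring
        obtain ⟨n, hn, he⟩ := ih i' (by omega) (by omega)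
        refine ⟨n, hn, ?_⟩
        rw [he]
        rw [div_eq_div_iff (by positivity) (by positivity)]
        push_cast
        ring
      · have hpow : (2:ℕ) ^ (k + 1) = 2 * 2 ^ k := by ring
        have hpos : 0 < (2:ℕ) ^ k := pow_pos (by norm_num) k
        refine ⟨2 ^ k + s, by omega, ?_⟩
        rw [eDy_of k s (by omega)]
        push_cast
        ring_nf
  rintro x ⟨i, k, h1, _, h3, rfl⟩
  exact key k i h1 h3

section Sums

variable (α : ℕ → ℝ)

/-- `α` with junk value at `0` removed. -/
noncomputable def a0 : ℕ → ℝ := fun n => if n = 0 then 0 else α n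

/-- sum of `α` over a set of indices. -/
noncomputable def T (A : Set ℕ) : ℝ := ∑' n, A.indicator (a0 α) n

variable {α}

section WithHyp
variable (hα : IsGapSeq α)
include hα

lemma a0_nonneg (n : ℕ) : 0 ≤ a0 α n := by
  unfold a0
  split
  · exact le_rfl
  · exact (hα.1 n (by omega)).le

lemma summable_a0 : Summable (a0 α) := by
  rw [← summable_nat_add_iff 1]
  have : (fun n => a0 α (n + 1)) = fun n => α (n + 1) := by
    funext n; simp [a0]
  rw [this]
  exact hα.2.2.summable

lemma summable_ind (A : Set ℕ) : Summable (A.indicator (a0 α)) :=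
  (summable_a0 hα).indicator A

lemma T_nonneg (A : Set ℕ) : 0 ≤ T α A :=
  tsum_nonneg fun n => Set.indicator_apply_nonneg fun _ => a0_nonneg hα n

lemma T_mono {A B : Set ℕ} (h : A ⊆ B) : T α A ≤ T α B :=
  Summable.tsum_le_tsum (fun n => Set.indicator_le_indicator_of_subset h (fun m => a0_nonneg hα m) n)
    (summable_ind hα A) (summable_ind hα B)

lemma T_union {A B : Set ℕ} (h : Disjoint A B) : T α (A ∪ B) = T α A + T α B := by
  unfold T
  rw [Set.indicator_union_of_disjoint h]
  exact Summable.tsum_add (summable_ind hα A) (summable_ind hα B)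

lemma T_Ici1 : T α {n | 1 ≤ n} = 1 := by
  unfold T
  have h1 : ({n | 1 ≤ n} : Set ℕ).indicator (a0 α) = a0 α := by
    funext n
    rcases Nat.eq_zero_or_pos n with rfl | hn
    · simp [a0, Set.indicator_apply]
    · rw [Set.indicator_of_mem (by exact hn)]
  rw [h1, Summable.tsum_eq_zero_add (summable_a0 hα)]
  have h2 : (fun n => a0 α (n + 1)) = fun n => α (n + 1) := by funext n; simp [a0]
  simp [a0, h2, hα.2.2.tsum_eq]

lemma T_finset (F : Finset ℕ) (hF : ∀ n ∈ F, 1 ≤ n) : T α ↑F = ∑ n ∈ F, α n := by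
  unfold T
  rw [tsum_eq_sum (s := F) (fun b hb => Set.indicator_of_notMem (by simpa using hb) _)]
  exact Finset.sum_congr rfl fun n hn => by
    rw [Set.indicator_of_mem (by simpa using hn)]
    unfold a0
    rw [if_neg (by have := hF n hn; omega)]

lemma T_singleton {n : ℕ} (hn : 1 ≤ n) : T α {n} = α n := by
  have := T_finset hα {n} (by simpa using hn)
  simpa using this

lemma T_diff {A B : Set ℕ} (h : A ⊆ B) : T α (B \ A) = T α B - T α A := by
  have hd : Disjoint A (B \ A) := Set.disjoint_sdiff_right
  have hu : A ∪ B \ A = B := Set.union_diff_cancel h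
  have := T_union hα hd
  rw [hu] at this
  linarith

end WithHyp

variable (α)

/-- tail sum from index `2^j`. -/
noncomputable def Rtail (j : ℕ) : ℝ := T α {n | 2 ^ j ≤ n}

/-- sum over the `j`-th block. -/
noncomputable def Sblk (j : ℕ) : ℝ := ∑ i ∈ Finset.Ico (2 ^ j) (2 ^ (j + 1)), α i

/-- lower bound series for lengths of level-`j` fundamental intervals. -/
noncomputable def Ltail (j : ℕ) : ℝ := ∑' t : ℕ, (2 : ℝ) ^ t * α (2 ^ (j + t + 1))

noncomputable def cseq (j : ℕ) : ℝ := Rtail α j / 2 ^ j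

noncomputable def Bslope (j : ℕ) : ℝ := (2 * Rtail α j - Rtail α (j + 1))⁻¹

variable {α}

lemma pow_le_pow_nat {j k : ℕ} (h : j ≤ k) : (2:ℕ) ^ j ≤ 2 ^ k :=
  Nat.pow_le_pow_right (by norm_num) h

section WithHyp2
variable (hα : IsGapSeq α)
include hα

lemma Rtail_split (j : ℕ) : Rtail α j = Sblk α j + Rtail α (j + 1) := by
  have hset : {n | 2 ^ j ≤ n} = ↑(Finset.Ico (2 ^ j) (2 ^ (j + 1))) ∪ {n | 2 ^ (j + 1) ≤ n} := by
    ext n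
    simp only [Set.mem_setOf_eq, Set.mem_union, Finset.coe_Ico, Set.mem_Ico]
    have h2 : (2:ℕ) ^ (j + 1) = 2 * 2 ^ j := by ring
    omega
  have hdis : Disjoint (↑(Finset.Ico (2 ^ j) (2 ^ (j + 1))) : Set ℕ) {n | 2 ^ (j + 1) ≤ n} := by
    rw [Set.disjoint_left]
    intro n hn hn'
    simp only [Finset.coe_Ico, Set.mem_Ico] at hn
    simp only [Set.mem_setOf_eq] at hn'
    omega
  rw [Rtail, hset, T_union hα hdis, T_finset hα _ (fun n hn => by
    simp only [Finset.mem_Ico] at hn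
    have : 0 < (2:ℕ) ^ j := pow_pos (by norm_num) j
    omega)]
  rfl

lemma Sblk_le (j : ℕ) : Sblk α j ≤ 2 ^ j * α (2 ^ j) := by
  have hcard : (Finset.Ico (2 ^ j) (2 ^ (j + 1))).card = 2 ^ j := by
    rw [Nat.card_Ico]
    have : (2:ℕ) ^ (j + 1) = 2 * 2 ^ j := by ring
    omega
  calc Sblk α j ≤ ∑ _i ∈ Finset.Ico (2 ^ j) (2 ^ (j + 1)), α (2 ^ j) := by
        refine Finset.sum_le_sum fun i hi => ?_
        simp only [Finset.mem_Ico] at hi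
        exact hα.2.1 _ _ (by have : 0 < (2:ℕ)^j := pow_pos (by norm_num) j; omega) hi.1
    _ = 2 ^ j * α (2 ^ j) := by rw [Finset.sum_const, hcard]; push_cast; ring

lemma Sblk_ge (j : ℕ) : 2 ^ j * α (2 ^ (j + 1)) ≤ Sblk α j := by
  have hcard : (Finset.Ico (2 ^ j) (2 ^ (j + 1))).card = 2 ^ j := by
    rw [Nat.card_Ico]
    have : (2:ℕ) ^ (j + 1) = 2 * 2 ^ j := by ring
    omega
  calc (2:ℝ) ^ j * α (2 ^ (j + 1)) = ∑ _i ∈ Finset.Ico (2 ^ j) (2 ^ (j + 1)), α (2 ^ (j+1)) := by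
        rw [Finset.sum_const, hcard]; push_cast; ring
    _ ≤ Sblk α j := by
        refine Finset.sum_le_sum fun i hi => ?_
        simp only [Finset.mem_Ico] at hi
        exact hα.2.1 _ _ (by have : 0 < (2:ℕ)^j := pow_pos (by norm_num) j; omega) hi.2.le

lemma alpha_le_Rtail (j : ℕ) : α (2 ^ j) ≤ Rtail α j := by
  have h1 : T α {2 ^ j} ≤ Rtail α j :=
    T_mono hα (by intro n hn; simp at hn; simp [hn])
  rwa [T_singleton hα (Nat.one_le_two_pow)] at h1

lemma Rtail_pos (j : ℕ) : 0 < Rtail α j :=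
  lt_of_lt_of_le (hα.1 _ Nat.one_le_two_pow) (alpha_le_Rtail hα j)

lemma Rtail_antitone {j k : ℕ} (h : j ≤ k) : Rtail α k ≤ Rtail α j :=
  T_mono hα (fun n hn => le_trans (pow_le_pow_nat h) hn)

lemma denom_pos (j : ℕ) : 0 < 2 * Rtail α j - Rtail α (j + 1) := by
  have h1 := Rtail_antitone hα (Nat.le_succ j)
  have h2 := Rtail_pos hα j
  linarith

lemma Bslope_pos (j : ℕ) : 0 < Bslope α j := inv_pos.2 (denom_pos hα j)

lemma Bslope_mono (j : ℕ) : Bslope α j ≤ Bslope α (j + 1) := by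
  have key : 2 * Rtail α (j + 1) - Rtail α (j + 2) ≤ 2 * Rtail α j - Rtail α (j + 1) := by
    have e1 := Rtail_split hα j
    have e2 := Rtail_split hα (j + 1)
    have h1 : Sblk α (j + 1) ≤ 2 * Sblk α j := by
      have a1 := Sblk_le hα (j + 1)
      have a2 := Sblk_ge hα j
      have hpw : (2:ℝ) ^ (j + 1) = 2 * 2 ^ j := by ring
      rw [hpw] at a1
      linarith
    linarith
  exact inv_anti₀ (denom_pos hα (j + 1)) key

lemma cseq_sub (j : ℕ) :
    cseq α j - cseq α (j + 1) = (2 * Rtail α j - Rtail α (j + 1)) / 2 ^ (j + 1) := by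
  unfold cseq
  have h1 : (2:ℝ) ^ (j + 1) = 2 * 2 ^ j := by ring
  field_simp
  ring

lemma cseq_strict_anti (j : ℕ) : cseq α (j + 1) < cseq α j := by
  have h1 := cseq_sub hα j
  have h2 := denom_pos hα j
  have h3 : (0:ℝ) < 2 ^ (j + 1) := by positivity
  nlinarith [div_pos h2 h3]

lemma cseq_anti {j k : ℕ} (h : j ≤ k) : cseq α k ≤ cseq α j := by
  induction k with
  | zero => simp at h; simp [h]
  | succ k ih =>
    rcases Nat.lt_or_ge j (k+1) with h' | h'
    · exact le_trans (cseq_strict_anti hα k).le (ih (by omega))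
    · have : j = k + 1 := by omega
      rw [this]

lemma cseq_pos (j : ℕ) : 0 < cseq α j := div_pos (Rtail_pos hα j) (by positivity)

lemma cseq_le_Rtail (j : ℕ) : cseq α j ≤ Rtail α j := by
  rw [cseq, div_le_iff₀ (by positivity)]
  nlinarith [Rtail_pos hα j, (one_le_pow₀ (by norm_num : (1:ℝ) ≤ 2) : (1:ℝ) ≤ 2 ^ j)]

lemma Bslope_mul_csub (j : ℕ) : Bslope α j * (cseq α j - cseq α (j + 1)) = ((2:ℝ) ^ (j + 1))⁻¹ := by
  rw [cseq_sub hα j, Bslope]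
  have := denom_pos hα j
  field_simp

lemma Rtail_eq_sub (j : ℕ) :
    Rtail α j = 1 - ∑ i ∈ Finset.range (2 ^ j - 1), α (i + 1) := by
  have h1 : T α {n | 1 ≤ n} = T α ↑(Finset.Ico 1 (2 ^ j)) + Rtail α j := by
    rw [Rtail]
    rw [← T_union hα (by
      rw [Set.disjoint_left]
      intro n hn hn'
      simp only [Finset.coe_Ico, Set.mem_Ico] at hn
      simp only [Set.mem_setOf_eq] at hn'
      omega)]
    congr 1
    ext n
    simp only [Finset.coe_Ico, Set.mem_Ico, Set.mem_union, Set.mem_setOf_eq]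
    have : 0 < (2:ℕ) ^ j := pow_pos (by norm_num) j
    omega
  rw [T_Ici1 hα] at h1
  rw [T_finset hα _ (fun n hn => by simp only [Finset.mem_Ico] at hn; omega)] at h1
  have h2 : ∑ i ∈ Finset.Ico 1 (2 ^ j), α i = ∑ i ∈ Finset.range (2 ^ j - 1), α (i + 1) := by
    rw [Finset.sum_Ico_eq_sum_range]
    refine Finset.sum_congr rfl fun i _ => by rw [Nat.add_comm]
  rw [h2] at h1
  linarith

lemma Rtail_tendsto : Tendsto (fun j => Rtail α j) atTop (𝓝 0) := by
  have h1 : Tendsto (fun N => ∑ i ∈ Finset.range N, α (i + 1)) atTop (𝓝 1) :=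
    hα.2.2.tendsto_sum_nat
  have h2 : Tendsto (fun j : ℕ => 2 ^ j - 1) atTop atTop := by
    refine tendsto_atTop_mono (fun j => ?_) tendsto_id
    have := @Nat.lt_two_pow_self j
    simp only [id]
    omega
  have h3 : Tendsto (fun j => ∑ i ∈ Finset.range (2 ^ j - 1), α (i + 1)) atTop (𝓝 1) :=
    h1.comp h2
  have h4 : Tendsto (fun j => 1 - ∑ i ∈ Finset.range (2 ^ j - 1), α (i + 1)) atTop (𝓝 (1 - 1)) :=
    tendsto_const_nhds.sub h3
  simp only [sub_self] at h4
  refine h4.congr fun j => (Rtail_eq_sub hα j).symm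

lemma cseq_tendsto : Tendsto (fun j => cseq α j) atTop (𝓝 0) := by
  refine squeeze_zero (fun j => (cseq_pos hα j).le) (fun j => cseq_le_Rtail hα j) (Rtail_tendsto hα)

lemma sum_Sblk (j T' : ℕ) :
    ∑ t ∈ Finset.range T', Sblk α (j + t) = Rtail α j - Rtail α (j + T') := by
  induction T' with
  | zero => simp
  | succ T' ih =>
    rw [Finset.sum_range_succ, ih, Rtail_split hα (j + T')]
    ring_nf

lemma summable_Lf (j : ℕ) : Summable (fun t : ℕ => (2:ℝ) ^ t * α (2 ^ (j + t + 1))) := by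
  refine summable_of_sum_range_le (c := Rtail α j / 2 ^ j) (fun t => ?_) (fun T' => ?_)
  · have := hα.1 (2 ^ (j + t + 1)) Nat.one_le_two_pow
    positivity
  · have h1 : ∀ t, (2:ℝ) ^ t * α (2 ^ (j + t + 1)) ≤ Sblk α (j + t) / 2 ^ j := by
      intro t
      rw [le_div_iff₀ (by positivity)]
      calc (2:ℝ) ^ t * α (2 ^ (j + t + 1)) * 2 ^ j = 2 ^ (j + t) * α (2 ^ ((j + t) + 1)) := by
            rw [show j + t + 1 = (j + t) + 1 by rfl]; rw [pow_add]; ring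
        _ ≤ Sblk α (j + t) := Sblk_ge hα (j + t)
    calc ∑ t ∈ Finset.range T', (2:ℝ) ^ t * α (2 ^ (j + t + 1))
        ≤ ∑ t ∈ Finset.range T', Sblk α (j + t) / 2 ^ j := Finset.sum_le_sum fun t _ => h1 t
      _ = (Rtail α j - Rtail α (j + T')) / 2 ^ j := by rw [← Finset.sum_div, sum_Sblk hα]
      _ ≤ Rtail α j / 2 ^ j := by
          have h5 := Rtail_pos hα (j + T')
          gcongr
          linarith

lemma Ltail_nonneg (j : ℕ) : 0 ≤ Ltail α j :=
  tsum_nonneg fun t => by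
    have := hα.1 (2 ^ (j + t + 1)) Nat.one_le_two_pow
    positivity

lemma I1 (j : ℕ) : Rtail α j ≤ 2 ^ j * α (2 ^ j) + 2 ^ (j + 1) * Ltail α j := by
  have key : ∀ T' : ℕ, Rtail α j ≤ 2 ^ j * α (2 ^ j) + 2 ^ (j + 1) * Ltail α j
      + Rtail α (j + (T' + 1)) := by
    intro T'
    have h1 : Rtail α j = ∑ t ∈ Finset.range (T' + 1), Sblk α (j + t) + Rtail α (j + (T' + 1)) := by
      rw [sum_Sblk hα]; ring
    have h3 : ∀ t ∈ Finset.range T',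
        Sblk α (j + (t + 1)) ≤ 2 ^ (j + 1) * ((2:ℝ) ^ t * α (2 ^ (j + t + 1))) := by
      intro t _
      have hp : (2:ℝ) ^ (j + t + 1) = 2 ^ (j + 1) * 2 ^ t := by
        rw [← pow_add]; congr 1; omega
      calc Sblk α (j + (t + 1)) ≤ 2 ^ (j + (t + 1)) * α (2 ^ (j + (t + 1))) := Sblk_le hα _
        _ = 2 ^ (j + 1) * ((2:ℝ) ^ t * α (2 ^ (j + t + 1))) := by
            rw [show j + (t + 1) = j + t + 1 by ring, hp]; ring
    have h2 : ∑ t ∈ Finset.range (T' + 1), Sblk α (j + t)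
        ≤ 2 ^ j * α (2 ^ j) + 2 ^ (j + 1) * ∑ t ∈ Finset.range T', (2:ℝ) ^ t * α (2 ^ (j + t + 1)) := by
      rw [Finset.sum_range_succ']
      have h4 : ∑ t ∈ Finset.range T', Sblk α (j + (t + 1))
          ≤ ∑ t ∈ Finset.range T', 2 ^ (j + 1) * ((2:ℝ) ^ t * α (2 ^ (j + t + 1))) :=
        Finset.sum_le_sum h3
      rw [← Finset.mul_sum] at h4
      simp only [Nat.add_zero]
      have h0 := Sblk_le hα j
      linarith
    have h5 : ∑ t ∈ Finset.range T', (2:ℝ) ^ t * α (2 ^ (j + t + 1)) ≤ Ltail α j :=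
      Summable.sum_le_tsum (Finset.range T')
        (fun t _ => by have := hα.1 (2 ^ (j + t + 1)) Nat.one_le_two_pow; positivity)
        (summable_Lf hα j)
    have h6 : (0:ℝ) < 2 ^ (j + 1) := by positivity
    nlinarith
  have hT : Tendsto (fun T' : ℕ => 2 ^ j * α (2 ^ j) + 2 ^ (j + 1) * Ltail α j
      + Rtail α (j + (T' + 1))) atTop
      (𝓝 (2 ^ j * α (2 ^ j) + 2 ^ (j + 1) * Ltail α j + 0)) := by
    refine Tendsto.add tendsto_const_nhds ?_
    exact (Rtail_tendsto hα).comp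
      (tendsto_atTop_mono (fun n => by simp only [id_eq]; omega) tendsto_id)
  rw [add_zero] at hT
  exact ge_of_tendsto hT (Filter.Eventually.of_forall key)

end WithHyp2

variable (α)

/-- the affine function through `(cseq j, 2⁻ʲ)` with slope `Bslope j`. -/
noncomputable def lineF (j : ℕ) (x : ℝ) : ℝ := ((2:ℝ) ^ j)⁻¹ + Bslope α j * (x - cseq α j)

/-- The gauge function. -/
noncomputable def hGauge (x : ℝ) : ℝ := min 1 (⨅ j : ℕ, lineF α j x)

variable {α}

section WithHyp3
variable (hα : IsGapSeq α)
include hα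

lemma lineF_alt (j : ℕ) (x : ℝ) :
    lineF α j x = ((2:ℝ) ^ (j + 1))⁻¹ + Bslope α j * (x - cseq α (j + 1)) := by
  have h1 := Bslope_mul_csub hα j
  have h2 : ((2:ℝ) ^ j)⁻¹ = 2 * ((2:ℝ) ^ (j + 1))⁻¹ := by
    rw [pow_succ]
    field_simp
  unfold lineF
  rw [h2]
  nlinarith [h1]

lemma Bslope_mul_cseq_le (j : ℕ) : Bslope α j * cseq α j ≤ ((2:ℝ) ^ j)⁻¹ := by
  have hd := denom_pos hα j
  have hR := Rtail_antitone hα (Nat.le_succ j)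
  rw [Bslope, cseq, inv_mul_le_iff₀ hd, inv_eq_one_div, mul_one_div]
  gcongr
  linarith

lemma lineF_nonneg {j : ℕ} {x : ℝ} (hx : 0 ≤ x) : 0 ≤ lineF α j x := by
  have h1 := Bslope_mul_cseq_le hα j
  have h2 := Bslope_pos hα j
  unfold lineF
  nlinarith

lemma bddBelow_lineF {x : ℝ} (hx : 0 ≤ x) : BddBelow (Set.range fun j => lineF α j x) := by
  refine ⟨0, fun y hy => ?_⟩
  obtain ⟨j, rfl⟩ := hy
  exact lineF_nonneg hα hx

lemma hGauge_le_lineF {x : ℝ} (hx : 0 ≤ x) (j : ℕ) : hGauge α x ≤ lineF α j x :=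
  le_trans (min_le_right _ _) (ciInf_le (bddBelow_lineF hα hx) j)

lemma hGauge_nonneg {x : ℝ} (hx : 0 ≤ x) : 0 ≤ hGauge α x :=
  le_min (by norm_num) (le_ciInf fun j => lineF_nonneg hα hx)

lemma hGauge_le_one (x : ℝ) : hGauge α x ≤ 1 := min_le_left _ _

lemma lineF_mono {j : ℕ} {x y : ℝ} (hxy : x ≤ y) : lineF α j x ≤ lineF α j y := by
  have := Bslope_pos hα j
  unfold lineF
  nlinarith

lemma hGauge_monotoneOn : MonotoneOn (hGauge α) (Set.Ici 0) := by
  intro x hx y hy hxy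
  refine min_le_min le_rfl (le_ciInf fun j => ?_)
  exact le_trans (ciInf_le (bddBelow_lineF hα hx) j) (lineF_mono hα hxy)

lemma lineF_succ_sub (k : ℕ) (x : ℝ) :
    lineF α (k + 1) x - lineF α k x = (Bslope α (k + 1) - Bslope α k) * (x - cseq α (k + 1)) := by
  rw [lineF_alt hα k]
  unfold lineF
  ring

lemma chain_up {j k : ℕ} (hjk : j ≤ k) {x : ℝ} (hx : cseq α j ≤ x) :
    lineF α j x ≤ lineF α k x := by
  induction k with
  | zero => simp_all
  | succ k ih =>
    rcases Nat.lt_or_ge j (k + 1) with h' | h'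
    · have h1 : lineF α j x ≤ lineF α k x := ih (by omega)
      have h2 : 0 ≤ (Bslope α (k + 1) - Bslope α k) * (x - cseq α (k + 1)) := by
        have hb := Bslope_mono hα k
        have hc : cseq α (k + 1) ≤ cseq α j := cseq_anti hα (by omega)
        nlinarith
      have := lineF_succ_sub hα k x
      linarith
    · have : j = k + 1 := by omega
      rw [this]

lemma chain_down {j k : ℕ} (hjk : j ≤ k) {x : ℝ} (hx : x ≤ cseq α k) :
    lineF α k x ≤ lineF α j x := by
  induction k with
  | zero => simp_all
  | succ k ih =>
    rcases Nat.lt_or_ge j (k + 1) with h' | h'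
    · have h2 : (Bslope α (k + 1) - Bslope α k) * (x - cseq α (k + 1)) ≤ 0 := by
        have hb := Bslope_mono hα k
        nlinarith
      have h3 := lineF_succ_sub hα k x
      have h4 : lineF α k x ≤ lineF α j x :=
        ih (by omega) (le_trans hx (cseq_strict_anti hα k).le)
      linarith
    · have : j = k + 1 := by omega
      rw [this]

lemma iInf_lineF_at_c (j : ℕ) : (⨅ k : ℕ, lineF α k (cseq α (j + 1))) = ((2:ℝ) ^ (j + 1))⁻¹ := by
  have hx0 : (0:ℝ) ≤ cseq α (j + 1) := (cseq_pos hα _).le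
  have heval : lineF α (j + 1) (cseq α (j + 1)) = ((2:ℝ) ^ (j + 1))⁻¹ := by
    unfold lineF; ring
  refine le_antisymm ?_ ?_
  · rw [← heval]
    exact ciInf_le (bddBelow_lineF hα hx0) (j + 1)
  · refine le_ciInf fun k => ?_
    rcases Nat.lt_or_ge k (j + 1) with h' | h'
    · rw [← heval]
      exact chain_down hα (by omega) le_rfl
    · rw [← heval]
      exact chain_up hα h' le_rfl

lemma hGauge_at_c (j : ℕ) : hGauge α (cseq α (j + 1)) = ((2:ℝ) ^ (j + 1))⁻¹ := by
  rw [hGauge, iInf_lineF_at_c hα j]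
  refine min_eq_right ?_
  rw [← inv_one]
  exact inv_anti₀ (by norm_num) (one_le_pow₀ (by norm_num))

lemma hGauge_ge {j : ℕ} {x : ℝ} (hx : cseq α (j + 1) ≤ x) :
    ((2:ℝ) ^ (j + 1))⁻¹ ≤ hGauge α x := by
  rw [← hGauge_at_c hα j]
  exact hGauge_monotoneOn hα (Set.mem_Ici.2 (cseq_pos hα _).le)
    (Set.mem_Ici.2 (le_trans (cseq_pos hα _).le hx)) hx

lemma hGauge_zero : hGauge α 0 = 0 := by
  refine le_antisymm ?_ (hGauge_nonneg hα le_rfl)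
  have h1 : ∀ j : ℕ, hGauge α 0 ≤ ((2:ℝ) ^ j)⁻¹ := by
    intro j
    refine le_trans (hGauge_le_lineF hα le_rfl j) ?_
    have := Bslope_mul_cseq_le hα j
    unfold lineF
    nlinarith [Bslope_pos hα j, cseq_pos hα j]
  have h2 : Tendsto (fun j : ℕ => ((2:ℝ) ^ j)⁻¹) atTop (𝓝 0) := by
    have h3 := tendsto_pow_atTop_nhds_zero_of_lt_one
      (by norm_num : (0:ℝ) ≤ 1/2) (by norm_num : (1/2:ℝ) < 1)
    refine h3.congr fun j => ?_
    rw [div_pow, one_pow, one_div]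
  exact ge_of_tendsto h2 (Filter.Eventually.of_forall h1)

lemma iInf_lineF_eq_finmin {J : ℕ} {x : ℝ} (hx : cseq α J ≤ x) :
    (⨅ k : ℕ, lineF α k x) =
      (Finset.range (J + 1)).inf' ⟨J, by simp⟩ (fun k => lineF α k x) := by
  have hx0 : (0:ℝ) ≤ x := le_trans (cseq_pos hα J).le hx
  refine le_antisymm ?_ ?_
  · exact Finset.le_inf' _ _ fun k _ => ciInf_le (bddBelow_lineF hα hx0) k
  · refine le_ciInf fun k => ?_
    rcases Nat.lt_or_ge k (J + 1) with h' | h'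
    · exact Finset.inf'_le _ (by simp [h'])
    · refine le_trans (Finset.inf'_le _ (by simp : J ∈ Finset.range (J + 1))) ?_
      exact chain_up hα (by omega) hx

lemma continuous_finmin (s : Finset ℕ) (hs : s.Nonempty) :
    Continuous fun x => s.inf' hs (fun k => lineF α k x) := by
  classical
  have hline : ∀ k : ℕ, Continuous fun x => lineF α k x := by
    intro k
    unfold lineF
    exact continuous_const.add (continuous_const.mul (continuous_id.sub continuous_const))
  induction hs using Finset.Nonempty.cons_induction with
  | singleton k => simpa using hline k
  | cons k s hk hs ih =>
    have heq : (fun x => (Finset.cons k s hk).inf' (Finset.cons_nonempty hk)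
        (fun k => lineF α k x)) = fun x => min (lineF α k x)
          (s.inf' hs (fun k => lineF α k x)) := by
      funext x
      rw [Finset.inf'_cons hs]
    have := Continuous.min (hline k) ih
    rw [← heq] at this
    exact this

lemma hGauge_continuousOn : ContinuousOn (hGauge α) (Set.Ici 0) := by
  intro x hx
  rcases eq_or_lt_of_le (Set.mem_Ici.1 hx) with rfl | hx0
  · -- continuity at 0
    rw [ContinuousWithinAt, hGauge_zero hα]
    rw [Metric.tendsto_nhdsWithin_nhds]
    intro ε hε
    obtain ⟨j, hj⟩ : ∃ j : ℕ, ((2:ℝ) ^ j)⁻¹ < ε / 2 := by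
      obtain ⟨j, hj⟩ := pow_unbounded_of_one_lt (2 / ε) (by norm_num : (1:ℝ) < 2)
      refine ⟨j, ?_⟩
      rw [inv_lt_iff_one_lt_mul₀ (by positivity)]
      have : 2 / ε < 2 ^ j := hj
      calc (1:ℝ) = ε / 2 * (2 / ε) := by field_simp
        _ < ε / 2 * 2 ^ j := by
            have hε2 : (0:ℝ) < ε / 2 := by positivity
            exact mul_lt_mul_of_pos_left this hε2
    have hB := Bslope_pos hα j
    refine ⟨min 1 (ε / 2 / Bslope α j), by positivity, ?_⟩
    intro y hy hdy
    have hy0 : 0 ≤ y := Set.mem_Ici.1 hy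
    have hyd : y < ε / 2 / Bslope α j := by
      rw [Real.dist_eq, abs_sub_lt_iff] at hdy
      have := lt_min_iff.1 (by linarith [hdy.1] : y - 0 < min 1 (ε / 2 / Bslope α j))
      linarith [this.2]
    have hup : hGauge α y ≤ lineF α j y := hGauge_le_lineF hα hy0 j
    have hlf : lineF α j y < ε := by
      have h1 := Bslope_mul_cseq_le hα j
      have h2 : Bslope α j * y < ε / 2 := by
        rw [div_div] at hyd
        calc Bslope α j * y < Bslope α j * (ε / (2 * Bslope α j)) := by
              exact mul_lt_mul_of_pos_left hyd hB
          _ = ε / 2 := by field_simp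
      unfold lineF
      have h3 := mul_pos hB (cseq_pos hα j)
      nlinarith
    rw [Real.dist_eq, abs_sub_lt_iff]
    constructor
    · linarith [hGauge_nonneg hα hy0, hup]
    · linarith [hGauge_nonneg hα hy0]
  · -- continuity at x > 0
    obtain ⟨J, hJ⟩ : ∃ J : ℕ, cseq α J < x := by
      have := cseq_tendsto hα
      rw [Metric.tendsto_atTop] at this
      obtain ⟨J, hJ⟩ := this x hx0
      refine ⟨J, ?_⟩
      have := hJ J le_rfl
      rw [Real.dist_eq, abs_sub_lt_iff] at this
      linarith [this.1, (cseq_pos hα J).le]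
    have hev : ∀ᶠ y in 𝓝 x, hGauge α y =
        min 1 ((Finset.range (J + 1)).inf' ⟨J, by simp⟩ (fun k => lineF α k y)) := by
      have hopen : IsOpen {y : ℝ | cseq α J < y} := isOpen_lt continuous_const continuous_id
      filter_upwards [hopen.mem_nhds hJ] with y hy
      rw [hGauge, iInf_lineF_eq_finmin hα (le_of_lt hy)]
    have hcont : Continuous fun y =>
        min 1 ((Finset.range (J + 1)).inf' ⟨J, by simp⟩ (fun k => lineF α k y)) :=
      continuous_const.min (continuous_finmin hα _ _)
    exact ContinuousWithinAt.congr_of_eventuallyEq hcont.continuousWithinAt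
      (hev.filter_mono nhdsWithin_le_nhds) (by
        rw [hGauge, iInf_lineF_eq_finmin hα hJ.le])

end WithHyp3

section Phi

variable {φ : ℝ → ℝ}

lemma a0_of_pos {n : ℕ} (hn : 1 ≤ n) : a0 α n = α n := by
  rw [a0]; simp only [if_neg (by omega : ¬ n = 0)]

lemma PhiFun_eq_T (hφα : IsGapFunOf α φ) (d : ℝ) :
    PhiFun φ d = T α {n : ℕ | 1 ≤ n ∧ eDy n < d} := by
  classical
  have hbij : Function.Bijective (fun p : ↥{n : ℕ | 1 ≤ n ∧ eDy n < d} =>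
      (⟨eDy p.1, eDy_mem_dyadics p.2.1, p.2.2⟩ : ↥(dyadics ∩ Set.Iio d))) := by
    constructor
    · rintro ⟨m, hm⟩ ⟨n, hn⟩ h
      simp only [Subtype.mk_eq_mk] at h ⊢
      exact eDy_inj hm.1 hn.1 (congrArg Subtype.val h)
    · rintro ⟨x, hx1, hx2⟩
      obtain ⟨n, hn1, hn2⟩ := dyadics_surj x hx1
      exact ⟨⟨n, hn1, by rw [hn2]; exact hx2⟩, by simp [hn2]⟩
  let E := Equiv.ofBijective _ hbij
  have h1 : ∑' p : ↥{n : ℕ | 1 ≤ n ∧ eDy n < d}, φ (eDy p.1)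
      = ∑' x : ↥(dyadics ∩ Set.Iio d), φ x := E.tsum_eq (fun x : ↥(dyadics ∩ Set.Iio d) => φ x)
  rw [PhiFun, ← h1]
  rw [show T α {n : ℕ | 1 ≤ n ∧ eDy n < d}
      = ∑' p : ↥{n : ℕ | 1 ≤ n ∧ eDy n < d}, a0 α p.1 from (tsum_subtype _ _).symm]
  exact tsum_congr fun p => by rw [phi_eDy hφα p.2.1, a0_of_pos p.2.1]

lemma grid_idx {j s : ℕ} (hs1 : 1 ≤ s) (hs2 : s < 2 ^ j) :
    ∃ m, 1 ≤ m ∧ m < 2 ^ j ∧ eDy m = (s : ℝ) / 2 ^ j := by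
  have hj : 1 ≤ j := by
    by_contra h
    interval_cases j <;> omega
  obtain ⟨m, hm1, hm2⟩ := dyadics_surj ((s : ℝ) / 2 ^ j) ⟨s, j, by omega, by omega, hs2, rfl⟩
  refine ⟨m, hm1, ?_, hm2⟩
  obtain ⟨k, r, hr, rfl⟩ := decomp m hm1
  rw [eDy_of k r hr] at hm2
  have hnat : (2 * r + 1) * 2 ^ j = s * 2 ^ (k + 1) := by
    have h2 : ((2 * r + 1 : ℕ) : ℝ) * 2 ^ j = (s : ℝ) * 2 ^ (k + 1) := by
      rw [div_eq_div_iff (by positivity) (by positivity)] at hm2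
      push_cast
      push_cast at hm2
      linarith
    exact_mod_cast h2
  have hk1j : k + 1 ≤ j := by
    by_contra hcon
    push_neg at hcon
    have hsplit : (2:ℕ) ^ (k + 1) = 2 ^ j * 2 ^ (k + 1 - j) := by
      rw [← pow_add]; congr 1; omega
    rw [hsplit] at hnat
    have hnat' : (2 * r + 1) * 2 ^ j = s * 2 ^ (k + 1 - j) * 2 ^ j := by rw [hnat]; ring
    have h3 : 2 * r + 1 = s * 2 ^ (k + 1 - j) :=
      Nat.eq_of_mul_eq_mul_right (pow_pos (by norm_num) _) hnat'
    have heven : 2 ∣ s * 2 ^ (k + 1 - j) := Dvd.dvd.mul_left (dvd_pow_self 2 (by omega)) s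
    rw [← h3] at heven
    omega
  calc 2 ^ k + r < 2 ^ k + 2 ^ k := by omega
    _ = 2 ^ (k + 1) := by ring
    _ ≤ 2 ^ j := pow_le_pow_nat hk1j

section WithAll
variable (hα : IsGapSeq α) (hφα : IsGapFunOf α φ)
include hα hφα

lemma phi_grid {j s : ℕ} (hs1 : 1 ≤ s) (hs2 : s < 2 ^ j) :
    α (2 ^ j) ≤ φ ((s : ℝ) / 2 ^ j) := by
  obtain ⟨m, hm1, hm2, hm3⟩ := grid_idx hs1 hs2
  rw [← hm3, phi_eDy hφα hm1]
  exact hα.2.1 m (2 ^ j) hm1 (by omega)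

end WithAll

variable (α)

/-- Left endpoint of the `s`-th closed interval at level `j`. -/
noncomputable def aEnd (j s : ℕ) : ℝ := T α {n : ℕ | 1 ≤ n ∧ eDy n ≤ (s : ℝ) / 2 ^ j}

/-- Right endpoint. -/
noncomputable def bEnd (j s : ℕ) : ℝ := T α {n : ℕ | 1 ≤ n ∧ eDy n < ((s : ℝ) + 1) / 2 ^ j}

variable {α}

/-- indices of dyadics strictly inside the `s`-th cell at level `j`. -/
def cellC (j s : ℕ) : Set ℕ :=
  {n : ℕ | 1 ≤ n ∧ (s : ℝ) / 2 ^ j < eDy n ∧ eDy n < ((s : ℝ) + 1) / 2 ^ j}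

lemma cellC_subset (j s : ℕ) : cellC j s ⊆ {n : ℕ | 2 ^ j ≤ n} := by
  rintro n ⟨hn1, hn2, hn3⟩
  simp only [Set.mem_setOf_eq]
  by_contra hcon
  push_neg at hcon
  obtain ⟨k, r, hr, rfl⟩ := decomp n hn1
  have hk1j : k + 1 ≤ j := by
    have : (2:ℕ) ^ (k+1) = 2 * 2 ^ k := by ring
    have h2 : 2 ^ k < 2 ^ j := by omega
    have := Nat.pow_lt_pow_iff_right (a := 2) (by norm_num : 1 < 2) |>.1 h2
    omega
  rw [eDy_of k r hr] at hn2 hn3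
  set q : ℕ := (2 * r + 1) * 2 ^ (j - (k + 1)) with hq
  have hqval : ((2 * (r:ℝ) + 1) / 2 ^ (k + 1)) = (q : ℝ) / 2 ^ j := by
    rw [div_eq_div_iff (by positivity) (by positivity)]
    push_cast [hq]
    have he : j - (k + 1) + (k + 1) = j := by omega
    rw [mul_assoc, ← pow_add, he]
  rw [hqval] at hn2 hn3
  have h2 : (s : ℝ) < q := by
    rw [div_lt_div_iff₀ (by positivity) (by positivity)] at hn2
    have hp : (0:ℝ) < 2 ^ j := by positivity
    nlinarith
  have h3 : (q : ℝ) < (s : ℝ) + 1 := by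
    rw [div_lt_div_iff₀ (by positivity) (by positivity)] at hn3
    have hp : (0:ℝ) < 2 ^ j := by positivity
    nlinarith
  have h2' : s < q := by exact_mod_cast h2
  have h3' : q < s + 1 := by
    have h4 : (q:ℝ) < ((s + 1 : ℕ):ℝ) := by push_cast; linarith
    exact_mod_cast h4
  omega

lemma cellC_disjoint {j s s' : ℕ} (h : s ≠ s') : Disjoint (cellC j s) (cellC j s') := by
  rw [Set.disjoint_left]
  rintro n ⟨hn1, hn2, hn3⟩ ⟨hm1, hm2, hm3⟩
  rcases Nat.lt_or_ge s s' with h' | h'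
  · have : ((s:ℝ) + 1) ≤ (s' : ℝ) := by exact_mod_cast by omega
    have hp : (0:ℝ) < 2 ^ j := by positivity
    have : ((s:ℝ) + 1) / 2 ^ j ≤ (s' : ℝ) / 2 ^ j := by gcongr
    linarith
  · have hlt : s' < s := by omega
    have : ((s':ℝ) + 1) ≤ (s : ℝ) := by exact_mod_cast by omega
    have hp : (0:ℝ) < 2 ^ j := by positivity
    have : ((s':ℝ) + 1) / 2 ^ j ≤ (s : ℝ) / 2 ^ j := by gcongr
    linarith

section WithAll2
variable (hα : IsGapSeq α) (hφα : IsGapFunOf α φ)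
include hα hφα

lemma aEnd_zero (j : ℕ) : aEnd α j 0 = 0 := by
  have : {n : ℕ | 1 ≤ n ∧ eDy n ≤ ((0:ℕ) : ℝ) / 2 ^ j} = ∅ := by
    ext n
    simp only [Set.mem_setOf_eq, Set.mem_empty_iff_false, iff_false, not_and]
    intro hn
    push_cast
    rw [zero_div]
    exact not_le.2 (eDy_pos hn)
  rw [aEnd, this]
  simp [T]

lemma bEnd_last (j : ℕ) (hj : 1 ≤ j) : bEnd α j (2 ^ j - 1) = 1 := by
  have hcast : (((2 ^ j - 1 : ℕ) : ℝ) + 1) = 2 ^ j := by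
    have h1 : 1 ≤ (2:ℕ) ^ j := Nat.one_le_two_pow
    push_cast [h1]
    ring
  have : {n : ℕ | 1 ≤ n ∧ eDy n < (((2 ^ j - 1 : ℕ) : ℝ) + 1) / 2 ^ j} = {n : ℕ | 1 ≤ n} := by
    ext n
    simp only [Set.mem_setOf_eq, hcast, div_self (by positivity : (2:ℝ)^j ≠ 0)]
    exact ⟨fun h => h.1, fun h => ⟨h, eDy_lt_one h⟩⟩
  rw [bEnd, this, T_Ici1 hα]

lemma aEnd_le_bEnd (j s : ℕ) : aEnd α j s ≤ bEnd α j s := by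
  refine T_mono hα fun n hn => ⟨hn.1, lt_of_le_of_lt hn.2 ?_⟩
  have hp : (0:ℝ) < 2 ^ j := by positivity
  rw [div_lt_div_iff₀ hp hp]
  nlinarith

lemma bEnd_sub_aEnd (j s : ℕ) : bEnd α j s - aEnd α j s = T α (cellC j s) := by
  have hsub : {n : ℕ | 1 ≤ n ∧ eDy n ≤ (s : ℝ) / 2 ^ j}
      ⊆ {n : ℕ | 1 ≤ n ∧ eDy n < ((s : ℝ) + 1) / 2 ^ j} := by
    rintro n ⟨hn1, hn2⟩
    refine ⟨hn1, lt_of_le_of_lt hn2 ?_⟩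
    have hp : (0:ℝ) < 2 ^ j := by positivity
    rw [div_lt_div_iff₀ hp hp]
    nlinarith
  have hdiff : {n : ℕ | 1 ≤ n ∧ eDy n < ((s : ℝ) + 1) / 2 ^ j}
      \ {n : ℕ | 1 ≤ n ∧ eDy n ≤ (s : ℝ) / 2 ^ j} = cellC j s := by
    ext n
    simp only [Set.mem_diff, Set.mem_setOf_eq, cellC, not_and, not_le]
    constructor
    · rintro ⟨⟨h1, h2⟩, h3⟩
      exact ⟨h1, h3 h1, h2⟩
    · rintro ⟨h1, h2, h3⟩
      exact ⟨⟨h1, h3⟩, fun _ => h2⟩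
  rw [← hdiff, T_diff hα hsub]
  rfl

lemma bEnd_eq (j s : ℕ) : bEnd α j s = PhiFun φ (((s : ℝ) + 1) / 2 ^ j) := by
  rw [PhiFun_eq_T hφα]
  rfl

lemma aEnd_eq {j s : ℕ} (hs1 : 1 ≤ s) (hs2 : s < 2 ^ j) :
    aEnd α j s = PhiFun φ ((s : ℝ) / 2 ^ j) + φ ((s : ℝ) / 2 ^ j) := by
  obtain ⟨m, hm1, hm2, hm3⟩ := grid_idx hs1 hs2
  have hset : {n : ℕ | 1 ≤ n ∧ eDy n ≤ (s : ℝ) / 2 ^ j}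
      = {n : ℕ | 1 ≤ n ∧ eDy n < (s : ℝ) / 2 ^ j} ∪ {m} := by
    ext n
    simp only [Set.mem_setOf_eq, Set.mem_union, Set.mem_singleton_iff]
    constructor
    · rintro ⟨h1, h2⟩
      rcases lt_or_eq_of_le h2 with h | h
      · exact Or.inl ⟨h1, h⟩
      · exact Or.inr (eDy_inj h1 hm1 (by rw [h, hm3]))
    · rintro (⟨h1, h2⟩ | rfl)
      · exact ⟨h1, h2.le⟩
      · exact ⟨hm1, le_of_eq hm3⟩
  have hdis : Disjoint {n : ℕ | 1 ≤ n ∧ eDy n < (s : ℝ) / 2 ^ j} ({m} : Set ℕ) := by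
    rw [Set.disjoint_right]
    intro n hn hnL
    rw [Set.mem_singleton_iff] at hn
    subst hn
    have h2 := hnL.2
    rw [hm3] at h2
    exact lt_irrefl _ h2
  rw [aEnd, hset, T_union hα hdis, T_singleton hα hm1, PhiFun_eq_T hφα, ← hm3,
    phi_eDy hφα hm1]

lemma cover_lemma (j : ℕ) (hj : 1 ≤ j) (hx0 : (0:ℝ) ≤ 1) :
    Kset φ ⊆ ⋃ s ∈ Finset.range (2 ^ j), Set.Icc (aEnd α j s) (bEnd α j s) := by
  classical
  intro x hx
  obtain ⟨⟨hx0', hx1⟩, hxgap⟩ := hx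
  set Sx := (Finset.range (2 ^ j)).filter (fun σ => aEnd α j σ ≤ x) with hSx
  have h0 : (0:ℕ) ∈ Sx := by
    rw [hSx, Finset.mem_filter]
    exact ⟨Finset.mem_range.2 (pow_pos (by norm_num) j), by rw [aEnd_zero hα hφα]; exact hx0'⟩
  have hne : Sx.Nonempty := ⟨0, h0⟩
  obtain ⟨s, hsmem, hsmax⟩ : ∃ s ∈ Sx, ∀ t ∈ Sx, t ≤ s :=
    ⟨Sx.max' hne, Sx.max'_mem hne, fun t ht => Finset.le_max' Sx t ht⟩
  have hsr : s < 2 ^ j := Finset.mem_range.1 (Finset.mem_filter.1 hsmem).1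
  have hsa : aEnd α j s ≤ x := (Finset.mem_filter.1 hsmem).2
  have hble : x ≤ bEnd α j s := by
    by_contra hcon
    push_neg at hcon
    rcases Nat.lt_or_ge (s + 1) (2 ^ j) with hlt | hge
    · have hd : ((s : ℝ) + 1) / 2 ^ j ∈ dyadics :=
        ⟨s + 1, j, by omega, by omega, hlt, by push_cast; ring⟩
      have hnot : x ∉ Set.Ioo (PhiFun φ (((s:ℝ) + 1) / 2 ^ j))
          (PhiFun φ (((s:ℝ) + 1) / 2 ^ j) + φ (((s:ℝ) + 1) / 2 ^ j)) := by
        intro hmem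
        exact hxgap (Set.mem_biUnion hd hmem)
      rw [Set.mem_Ioo, not_and_or] at hnot
      have hlow : PhiFun φ (((s:ℝ) + 1) / 2 ^ j) < x := by
        rw [← bEnd_eq hα hφα]
        exact hcon
      have hup : PhiFun φ (((s:ℝ) + 1) / 2 ^ j) + φ (((s:ℝ) + 1) / 2 ^ j) ≤ x := by
        rcases hnot with h | h
        · exact absurd hlow h
        · linarith [not_lt.1 h]
      have hcast : ((s + 1 : ℕ) : ℝ) = (s : ℝ) + 1 := by push_cast; ring
      have haeq := aEnd_eq hα hφα (show 1 ≤ s + 1 by omega) hlt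
      rw [hcast] at haeq
      have hmem2 : s + 1 ∈ Sx := by
        rw [hSx, Finset.mem_filter]
        exact ⟨Finset.mem_range.2 hlt, by rw [haeq]; exact hup⟩
      have := hsmax (s + 1) hmem2
      omega
    · have hseq : s = 2 ^ j - 1 := by omega
      have : bEnd α j s = 1 := by rw [hseq]; exact bEnd_last hα hφα j hj
      rw [this] at hcon
      linarith
  refine Set.mem_biUnion (Finset.mem_range.2 hsr) ?_
  exact Set.mem_Icc.2 ⟨hsa, hble⟩

lemma sum_T_cells_le (j : ℕ) :
    ∑ s ∈ Finset.range (2 ^ j), T α (cellC j s) ≤ Rtail α j := by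
  classical
  have key : ∀ N : ℕ, ∑ s ∈ Finset.range N, T α (cellC j s)
      = T α (⋃ s ∈ Finset.range N, cellC j s) := by
    intro N
    induction N with
    | zero => simp [T]
    | succ N ih =>
      rw [Finset.sum_range_succ, ih]
      rw [← T_union hα (by
        rw [Set.disjoint_left]
        intro n hn hn'
        rw [Set.mem_iUnion₂] at hn
        obtain ⟨t, ht, hnt⟩ := hn
        rw [Finset.mem_range] at ht
        exact absurd hn' (Set.disjoint_left.1 (cellC_disjoint (show t ≠ N by omega)) hnt))]
      congr 1
      ext n
      simp only [Set.mem_iUnion₂, Set.mem_union, Finset.mem_range]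
      constructor
      · rintro (⟨t, ht, hnt⟩ | h)
        · exact ⟨t, by omega, hnt⟩
        · exact ⟨N, by omega, h⟩
      · rintro ⟨t, ht, hnt⟩
        rcases Nat.lt_or_ge t N with h' | h'
        · exact Or.inl ⟨t, h', hnt⟩
        · have : t = N := by omega
          subst this
          exact Or.inr hnt
  rw [key]
  refine T_mono hα fun n hn => ?_
  rw [Set.mem_iUnion₂] at hn
  obtain ⟨t, _, hnt⟩ := hn
  exact cellC_subset j t hnt

omit hα hφα in
lemma cell_elt_lt {j s t r : ℕ} (hs : s < 2 ^ j) (hr : r < 2 ^ t) :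
    s * 2 ^ t + r < 2 ^ (j + t) := by
  have h1 : (s + 1) * 2 ^ t = s * 2 ^ t + 2 ^ t := by ring
  have h2 : (s + 1) * 2 ^ t ≤ 2 ^ j * 2 ^ t := Nat.mul_le_mul_right _ (by omega)
  rw [← pow_add] at h2
  omega

omit hα hφα in
lemma mem_cellC {j s t r : ℕ} (hs : s < 2 ^ j) (hr : r < 2 ^ t) :
    2 ^ (j + t) + (s * 2 ^ t + r) ∈ cellC j s := by
  have hm := cell_elt_lt hs hr
  have heD := eDy_of (j + t) (s * 2 ^ t + r) hm
  have hp2j : (0:ℝ) < 2 ^ j := by positivity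
  have hpjt : (0:ℝ) < 2 ^ (j + t + 1) := by positivity
  have hpows : (2:ℝ) ^ (j + t + 1) = 2 * 2 ^ t * 2 ^ j := by
    rw [pow_add, pow_add, pow_one]; ring
  have hrR : (r : ℝ) + 1 ≤ 2 ^ t := by exact_mod_cast hr
  refine ⟨by have h0 : 0 < (2:ℕ) ^ (j + t) := pow_pos (by norm_num) _; omega, ?_, ?_⟩
  · rw [heD, div_lt_div_iff₀ hp2j hpjt, hpows]
    push_cast
    nlinarith [pow_pos (by norm_num : (0:ℝ) < 2) j, pow_pos (by norm_num : (0:ℝ) < 2) t]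
  · rw [heD, div_lt_div_iff₀ hpjt hp2j, hpows]
    push_cast
    nlinarith [pow_pos (by norm_num : (0:ℝ) < 2) j, pow_pos (by norm_num : (0:ℝ) < 2) t]

lemma Ltail_le_T_cellC {j s : ℕ} (hs : s < 2 ^ j) : Ltail α j ≤ T α (cellC j s) := by
  classical
  refine Real.tsum_le_of_sum_range_le
    (fun t => by have := hα.1 (2 ^ (j + t + 1)) Nat.one_le_two_pow; positivity)
    (fun T' => ?_)
  set Fb : Finset ℕ := (Finset.range T').biUnion
    (fun t => (Finset.range (2 ^ t)).image (fun r => 2 ^ (j + t) + (s * 2 ^ t + r))) with hFb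
  have hFbmem : ∀ n ∈ Fb, n ∈ cellC j s := by
    intro n hn
    rw [hFb, Finset.mem_biUnion] at hn
    obtain ⟨t, _, hnt⟩ := hn
    rw [Finset.mem_image] at hnt
    obtain ⟨r, hr, rfl⟩ := hnt
    exact mem_cellC hs (Finset.mem_range.1 hr)
  have hsum1 : ∑ n ∈ Fb, (cellC j s).indicator (a0 α) n = ∑ n ∈ Fb, α n := by
    refine Finset.sum_congr rfl fun n hn => ?_
    rw [Set.indicator_of_mem (hFbmem n hn), a0_of_pos (hFbmem n hn).1]
  have hdisF : ∀ t₁ ∈ Finset.range T', ∀ t₂ ∈ Finset.range T', t₁ ≠ t₂ →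
      Disjoint ((Finset.range (2 ^ t₁)).image (fun r => 2 ^ (j + t₁) + (s * 2 ^ t₁ + r)))
        ((Finset.range (2 ^ t₂)).image (fun r => 2 ^ (j + t₂) + (s * 2 ^ t₂ + r))) := by
    have hgen : ∀ t₁ t₂ : ℕ, t₁ < t₂ →
        Disjoint ((Finset.range (2 ^ t₁)).image (fun r => 2 ^ (j + t₁) + (s * 2 ^ t₁ + r)))
          ((Finset.range (2 ^ t₂)).image (fun r => 2 ^ (j + t₂) + (s * 2 ^ t₂ + r))) := by
      intro t₁ t₂ ht
      rw [Finset.disjoint_left]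
      intro n hn1 hn2
      rw [Finset.mem_image] at hn1 hn2
      obtain ⟨r₁, hr₁, he₁⟩ := hn1
      obtain ⟨r₂, hr₂, he₂⟩ := hn2
      rw [Finset.mem_range] at hr₁ hr₂
      have hb1 := cell_elt_lt hs hr₁
      have hb2 := cell_elt_lt hs hr₂
      have hle : (2:ℕ) ^ (j + t₁ + 1) ≤ 2 ^ (j + t₂) := pow_le_pow_nat (by omega)
      have hpow1 : (2:ℕ) ^ (j + t₁ + 1) = 2 * 2 ^ (j + t₁) := by ring
      omega
    intro t₁ h₁ t₂ h₂ hne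
    rcases Nat.lt_or_ge t₁ t₂ with h | h
    · exact hgen t₁ t₂ h
    · exact (hgen t₂ t₁ (by omega)).symm
  have hsum2 : ∑ n ∈ Fb, α n
      = ∑ t ∈ Finset.range T', ∑ n ∈ (Finset.range (2 ^ t)).image
          (fun r => 2 ^ (j + t) + (s * 2 ^ t + r)), α n := by
    rw [hFb, Finset.sum_biUnion]
    intro t₁ h₁ t₂ h₂ hne
    exact hdisF t₁ h₁ t₂ h₂ hne
  have hsum3 : ∀ t : ℕ, (2:ℝ) ^ t * α (2 ^ (j + t + 1))
      ≤ ∑ n ∈ (Finset.range (2 ^ t)).image (fun r => 2 ^ (j + t) + (s * 2 ^ t + r)), α n := by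
    intro t
    rw [Finset.sum_image (by intro a _ b _ h; simp only at h; omega)]
    have : ∀ r ∈ Finset.range (2 ^ t), α (2 ^ (j + t + 1)) ≤ α (2 ^ (j + t) + (s * 2 ^ t + r)) := by
      intro r hr
      refine hα.2.1 _ _ (by have h0 : 0 < (2:ℕ) ^ (j + t) := pow_pos (by norm_num) _; omega) ?_
      have := cell_elt_lt hs (Finset.mem_range.1 hr)
      have hpow : (2:ℕ) ^ (j + t + 1) = 2 * 2 ^ (j + t) := by ring
      omega
    calc (2:ℝ) ^ t * α (2 ^ (j + t + 1))
        = ∑ _r ∈ Finset.range (2 ^ t), α (2 ^ (j + t + 1)) := by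
          rw [Finset.sum_const, Finset.card_range]; push_cast; ring
      _ ≤ ∑ r ∈ Finset.range (2 ^ t), α (2 ^ (j + t) + (s * 2 ^ t + r)) :=
          Finset.sum_le_sum this
  calc ∑ t ∈ Finset.range T', (2:ℝ) ^ t * α (2 ^ (j + t + 1))
      ≤ ∑ t ∈ Finset.range T', ∑ n ∈ (Finset.range (2 ^ t)).image
          (fun r => 2 ^ (j + t) + (s * 2 ^ t + r)), α n :=
        Finset.sum_le_sum fun t _ => hsum3 t
    _ = ∑ n ∈ Fb, (cellC j s).indicator (a0 α) n := by rw [hsum1, hsum2]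
    _ ≤ T α (cellC j s) :=
        Summable.sum_le_tsum Fb (fun n _ => Set.indicator_apply_nonneg fun _ => a0_nonneg hα n)
          (summable_ind hα _)

end WithAll2

variable (α φ)

/-- the candidate members below `x` for the inverse Cantor function. -/
def FS (x : ℝ) : Set ℝ := insert 0 {d | d ∈ dyadics ∧ PhiFun φ d + φ d ≤ x}

/-- the inverse Cantor-type function. -/
noncomputable def Fc (x : ℝ) : ℝ := sSup (FS φ x)

variable {α φ}

section WithAll3
variable (hα : IsGapSeq α) (hφα : IsGapFunOf α φ)
include hα hφα

lemma dyadic_lt_one {d : ℝ} (hd : d ∈ dyadics) : 0 < d ∧ d < 1 := by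
  obtain ⟨n, hn, rfl⟩ := dyadics_surj d hd
  exact ⟨eDy_pos hn, eDy_lt_one hn⟩

lemma FS_bddAbove (x : ℝ) : BddAbove (FS φ x) := by
  refine ⟨1, fun y hy => ?_⟩
  rcases hy with rfl | ⟨hy1, _⟩
  · norm_num
  · exact (dyadic_lt_one hα hφα hy1).2.le

omit hα hφα in
lemma FS_nonempty (x : ℝ) : (FS φ x).Nonempty := ⟨0, Set.mem_insert 0 _⟩

lemma Fc_nonneg (x : ℝ) : 0 ≤ Fc φ x :=
  le_csSup (FS_bddAbove hα hφα x) (Set.mem_insert 0 _)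

lemma Fc_le_one (x : ℝ) : Fc φ x ≤ 1 := by
  refine csSup_le (FS_nonempty x) fun y hy => ?_
  rcases hy with rfl | ⟨hy1, _⟩
  · norm_num
  · exact (dyadic_lt_one hα hφα hy1).2.le

lemma Fc_mono : Monotone (Fc φ) := by
  intro x y hxy
  refine csSup_le_csSup (FS_bddAbove hα hφα y) (FS_nonempty x) fun z hz => ?_
  rcases hz with rfl | ⟨h1, h2⟩
  · exact Set.mem_insert 0 _
  · exact Set.mem_insert_of_mem _ ⟨h1, h2.trans hxy⟩

lemma Phi_add_eq {m : ℕ} (hm : 1 ≤ m) :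
    PhiFun φ (eDy m) + φ (eDy m) = T α {n : ℕ | 1 ≤ n ∧ eDy n ≤ eDy m} := by
  have hset : {n : ℕ | 1 ≤ n ∧ eDy n ≤ eDy m}
      = {n : ℕ | 1 ≤ n ∧ eDy n < eDy m} ∪ {m} := by
    ext n
    simp only [Set.mem_setOf_eq, Set.mem_union, Set.mem_singleton_iff]
    constructor
    · rintro ⟨h1, h2⟩
      rcases lt_or_eq_of_le h2 with h | h
      · exact Or.inl ⟨h1, h⟩
      · exact Or.inr (eDy_inj h1 hm h)
    · rintro (⟨h1, h2⟩ | rfl)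
      · exact ⟨h1, h2.le⟩
      · exact ⟨hm, le_rfl⟩
  have hdis : Disjoint {n : ℕ | 1 ≤ n ∧ eDy n < eDy m} ({m} : Set ℕ) := by
    rw [Set.disjoint_right]
    intro n hn hnL
    rw [Set.mem_singleton_iff] at hn
    subst hn
    exact lt_irrefl _ hnL.2
  rw [hset, T_union hα hdis, T_singleton hα hm, PhiFun_eq_T hφα, phi_eDy hφα hm]

lemma G_pos {m : ℕ} (hm : 1 ≤ m) : 0 < PhiFun φ (eDy m) + φ (eDy m) := by
  rw [Phi_add_eq hα hφα hm]
  calc (0:ℝ) < α m := hα.1 m hm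
    _ = T α {m} := (T_singleton hα hm).symm
    _ ≤ T α {n : ℕ | 1 ≤ n ∧ eDy n ≤ eDy m} :=
        T_mono hα (by rintro n rfl; exact ⟨hm, le_rfl⟩)

lemma G_le_one {m : ℕ} (hm : 1 ≤ m) : PhiFun φ (eDy m) + φ (eDy m) ≤ 1 := by
  rw [Phi_add_eq hα hφα hm, ← T_Ici1 hα]
  exact T_mono hα fun n hn => hn.1

lemma G_le_Phi_of_lt {m n : ℕ} (hm : 1 ≤ m) (hn : 1 ≤ n) (h : eDy m < eDy n) :
    PhiFun φ (eDy m) + φ (eDy m) ≤ PhiFun φ (eDy n) := by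
  rw [Phi_add_eq hα hφα hm, PhiFun_eq_T hφα]
  exact T_mono hα fun p hp => ⟨hp.1, lt_of_le_of_lt hp.2 h⟩

lemma Phi_lt_G {n : ℕ} (hn : 1 ≤ n) : PhiFun φ (eDy n) < PhiFun φ (eDy n) + φ (eDy n) := by
  have := hα.1 n hn
  rw [phi_eDy hφα hn]
  linarith

lemma dyadic_between {a b : ℝ} (ha : 0 ≤ a) (hab : a < b) (hb : b ≤ 1) :
    ∃ m, 1 ≤ m ∧ a < eDy m ∧ eDy m < b := by
  obtain ⟨j, hj⟩ : ∃ j : ℕ, 1 / (b - a) < 2 ^ j :=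
    pow_unbounded_of_one_lt _ (by norm_num : (1:ℝ) < 2)
  have hba : (0:ℝ) < b - a := by linarith
  have hj' : 1 / 2 ^ j < b - a := by
    rw [div_lt_iff₀ (by positivity)]
    rw [div_lt_iff₀ hba] at hj
    nlinarith
  set k := ⌊a * 2 ^ j⌋₊ + 1 with hk
  have hk1 : a * 2 ^ j < k := by
    rw [hk]
    push_cast
    exact Nat.lt_floor_add_one _
  have hk2 : (k : ℝ) ≤ a * 2 ^ j + 1 := by
    rw [hk]
    push_cast
    have := Nat.floor_le (by positivity : (0:ℝ) ≤ a * 2 ^ j)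
    linarith
  have hak : a < (k : ℝ) / 2 ^ j := by
    rw [lt_div_iff₀ (by positivity)]
    exact hk1
  have hkb : (k : ℝ) / 2 ^ j < b := by
    rw [div_lt_iff₀ (by positivity)]
    calc (k:ℝ) ≤ a * 2 ^ j + 1 := hk2
      _ < b * 2 ^ j := by
          have h3 : 1 / 2 ^ j * 2 ^ j < (b - a) * 2 ^ j := by
            have : (0:ℝ) < 2 ^ j := by positivity
            exact mul_lt_mul_of_pos_right hj' this
          rw [one_div, inv_mul_cancel₀ (by positivity : ((2:ℝ) ^ j) ≠ 0)] at h3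
          nlinarith
  have hklt : k < 2 ^ j := by
    have h4 : (k : ℝ) < 2 ^ j := by
      calc (k:ℝ) < b * 2 ^ j := by
            rw [div_lt_iff₀ (by positivity)] at hkb
            exact hkb
        _ ≤ 1 * 2 ^ j := by
            have : (0:ℝ) < 2 ^ j := by positivity
            nlinarith
        _ = 2 ^ j := by ring
    exact_mod_cast h4
  obtain ⟨m, hm1, hm2, hm3⟩ := grid_idx (show 1 ≤ k by omega) hklt
  exact ⟨m, hm1, by rw [hm3]; exact hak, by rw [hm3]; exact hkb⟩

lemma mem_FS_iff {m : ℕ} (hm : 1 ≤ m) (x : ℝ) :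
    eDy m ∈ FS φ x ↔ PhiFun φ (eDy m) + φ (eDy m) ≤ x := by
  constructor
  · rintro (h | ⟨h1, h2⟩)
    · exact absurd h (by have := eDy_pos hm; intro hcon; rw [hcon] at this; exact lt_irrefl _ this)
    · exact h2
  · intro h
    exact Set.mem_insert_of_mem _ ⟨eDy_mem_dyadics hm, h⟩

lemma le_Fc_of_mem {x y : ℝ} (hy : y ∈ FS φ x) : y ≤ Fc φ x :=
  le_csSup (FS_bddAbove hα hφα x) hy

lemma G_gt_of_gt_Fc {m : ℕ} (hm : 1 ≤ m) {x : ℝ} (h : Fc φ x < eDy m) :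
    x < PhiFun φ (eDy m) + φ (eDy m) := by
  by_contra hcon
  push_neg at hcon
  exact absurd (le_Fc_of_mem hα hφα ((mem_FS_iff hα hφα hm x).2 hcon)) (not_le.2 h)

lemma Fc_le_of_forall {x c : ℝ} (hc : 0 ≤ c)
    (h : ∀ n, 1 ≤ n → PhiFun φ (eDy n) + φ (eDy n) ≤ x → eDy n ≤ c) : Fc φ x ≤ c := by
  refine csSup_le (FS_nonempty x) fun y hy => ?_
  rcases hy with rfl | ⟨h1, h2⟩
  · exact hc
  · obtain ⟨n, hn, rfl⟩ := dyadics_surj y h1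
    exact h n hn h2

lemma Fc_G (m : ℕ) (hm : 1 ≤ m) : Fc φ (PhiFun φ (eDy m) + φ (eDy m)) = eDy m := by
  refine le_antisymm ?_ ?_
  · refine Fc_le_of_forall hα hφα (eDy_pos hm).le fun n hn hG => ?_
    by_contra hcon
    push_neg at hcon
    have h1 := G_le_Phi_of_lt hα hφα hm hn hcon
    have h2 := Phi_lt_G hα hφα hn
    linarith
  · exact le_Fc_of_mem hα hφα ((mem_FS_iff hα hφα hm _).2 le_rfl)

lemma Fc_Phi (m : ℕ) (hm : 1 ≤ m) : Fc φ (PhiFun φ (eDy m)) = eDy m := by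
  refine le_antisymm ?_ ?_
  · refine Fc_le_of_forall hα hφα (eDy_pos hm).le fun n hn hG => ?_
    by_contra hcon
    push_neg at hcon
    have h1 := G_le_Phi_of_lt hα hφα hm hn hcon
    have h2 := Phi_lt_G hα hφα hn
    have h3 := Phi_lt_G hα hφα hm
    linarith
  · by_contra hcon
    push_neg at hcon
    obtain ⟨n, hn1, hn2, hn3⟩ := dyadic_between hα hφα (Fc_nonneg hα hφα _) hcon (eDy_lt_one hm).le
    have h4 : PhiFun φ (eDy n) + φ (eDy n) ≤ PhiFun φ (eDy m) :=
      G_le_Phi_of_lt hα hφα hn1 hm hn3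
    have h5 := le_Fc_of_mem hα hφα ((mem_FS_iff hα hφα hn1 _).2 h4)
    linarith

lemma Fc_one : Fc φ 1 = 1 := by
  refine le_antisymm (Fc_le_one hα hφα 1) ?_
  by_contra hcon
  push_neg at hcon
  obtain ⟨n, hn1, hn2, hn3⟩ := dyadic_between hα hφα (Fc_nonneg hα hφα _) hcon le_rfl
  have h5 := le_Fc_of_mem hα hφα ((mem_FS_iff hα hφα hn1 _).2 (G_le_one hα hφα hn1))
  linarith

lemma Fc_zero : Fc φ 0 = 0 := by
  refine le_antisymm ?_ (Fc_nonneg hα hφα 0)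
  refine Fc_le_of_forall hα hφα le_rfl fun n hn hG => ?_
  exact absurd hG (not_le.2 (G_pos hα hφα hn))

lemma Fc_right_continuous (x₀ : ℝ) : ContinuousWithinAt (Fc φ) (Set.Ici x₀) x₀ := by
  rw [Metric.continuousWithinAt_iff]
  intro ε hε
  rcases le_or_gt 1 (Fc φ x₀ + ε / 2) with hcase | hcase
  · refine ⟨1, by norm_num, fun y hy hdy => ?_⟩
    have h1 : Fc φ x₀ ≤ Fc φ y := Fc_mono hα hφα (Set.mem_Ici.1 hy)
    have h2 : Fc φ y ≤ 1 := Fc_le_one hα hφα y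
    rw [Real.dist_eq, abs_sub_lt_iff]
    constructor <;> linarith
  · obtain ⟨n, hn1, hn2, hn3⟩ := dyadic_between hα hφα (Fc_nonneg hα hφα x₀)
      (by linarith : Fc φ x₀ < Fc φ x₀ + ε / 2) (by linarith)
    have hG : x₀ < PhiFun φ (eDy n) + φ (eDy n) := G_gt_of_gt_Fc hα hφα hn1 hn2
    refine ⟨PhiFun φ (eDy n) + φ (eDy n) - x₀, by linarith, fun y hy hdy => ?_⟩
    have hy0 : x₀ ≤ y := Set.mem_Ici.1 hy
    have hylt : y < PhiFun φ (eDy n) + φ (eDy n) := by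
      rw [Real.dist_eq, abs_sub_lt_iff] at hdy
      linarith [hdy.1]
    have hFy : Fc φ y ≤ eDy n := by
      refine Fc_le_of_forall hα hφα (eDy_pos hn1).le fun p hp hG' => ?_
      by_contra hcon
      push_neg at hcon
      have h1 := G_le_Phi_of_lt hα hφα hn1 hp hcon
      have h2 := Phi_lt_G hα hφα hp
      linarith
    have h1 : Fc φ x₀ ≤ Fc φ y := Fc_mono hα hφα hy0
    rw [Real.dist_eq, abs_sub_lt_iff]
    constructor <;> linarith

/-- The inverse Cantor function as a Stieltjes function. -/
noncomputable def Fst : StieltjesFunction ℝ where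
  toFun := Fc φ
  mono' := Fc_mono hα hφα
  right_continuous' := Fc_right_continuous hα hφα

lemma muK_Ioc (u v : ℝ) :
    (Fst hα hφα).measure (Set.Ioc u v) = ENNReal.ofReal (Fc φ v - Fc φ u) :=
  StieltjesFunction.measure_Ioc _ u v

lemma gap_null {m : ℕ} (hm : 1 ≤ m) :
    (Fst hα hφα).measure
      (Set.Ioo (PhiFun φ (eDy m)) (PhiFun φ (eDy m) + φ (eDy m))) = 0 := by
  refine le_antisymm ?_ (zero_le)
  calc (Fst hα hφα).measure (Set.Ioo (PhiFun φ (eDy m)) (PhiFun φ (eDy m) + φ (eDy m)))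
      ≤ (Fst hα hφα).measure (Set.Ioc (PhiFun φ (eDy m)) (PhiFun φ (eDy m) + φ (eDy m))) :=
        measure_mono Set.Ioo_subset_Ioc_self
    _ = ENNReal.ofReal (Fc φ (PhiFun φ (eDy m) + φ (eDy m)) - Fc φ (PhiFun φ (eDy m))) :=
        muK_Ioc hα hφα _ _
    _ = 0 := by rw [Fc_G hα hφα m hm, Fc_Phi hα hφα m hm, sub_self, ENNReal.ofReal_zero]

omit hα hφα in
lemma dyadics_countable : (dyadics : Set ℝ).Countable := by
  have : dyadics = eDy '' {n : ℕ | 1 ≤ n} := by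
    ext x
    constructor
    · intro hx
      obtain ⟨n, hn, rfl⟩ := dyadics_surj x hx
      exact ⟨n, hn, rfl⟩
    · rintro ⟨n, hn, rfl⟩
      exact eDy_mem_dyadics hn
  rw [this]
  exact (Set.to_countable _).image _

lemma gaps_null :
    (Fst hα hφα).measure (⋃ d ∈ dyadics, Set.Ioo (PhiFun φ d) (PhiFun φ d + φ d)) = 0 := by
  rw [measure_biUnion_null_iff (dyadics_countable)]
  intro d hd
  obtain ⟨m, hm, rfl⟩ := dyadics_surj d hd
  exact gap_null hα hφα hm

lemma muK_Kset : 1 ≤ (Fst hα hφα).measure (Kset φ) := by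
  have h1 : (Fst hα hφα).measure (Set.Ioc (0:ℝ) 1) = 1 := by
    rw [muK_Ioc hα hφα, Fc_one hα hφα, Fc_zero hα hφα, sub_zero, ENNReal.ofReal_one]
  have h2 : Set.Ioc (0:ℝ) 1 ⊆ Kset φ ∪ ⋃ d ∈ dyadics, Set.Ioo (PhiFun φ d) (PhiFun φ d + φ d) := by
    intro x hx
    by_cases hmem : x ∈ ⋃ d ∈ dyadics, Set.Ioo (PhiFun φ d) (PhiFun φ d + φ d)
    · exact Or.inr hmem
    · exact Or.inl ⟨⟨hx.1.le, hx.2⟩, hmem⟩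
  calc (1:ℝ≥0∞) = (Fst hα hφα).measure (Set.Ioc (0:ℝ) 1) := h1.symm
    _ ≤ (Fst hα hφα).measure (Kset φ)
        + (Fst hα hφα).measure (⋃ d ∈ dyadics, Set.Ioo (PhiFun φ d) (PhiFun φ d + φ d)) :=
        le_trans (measure_mono h2) (measure_union_le _ _)
    _ = (Fst hα hφα).measure (Kset φ) := by rw [gaps_null hα hφα, add_zero]

lemma F_count {u v : ℝ} {j : ℕ} (hj : 1 ≤ j) (hlt : Fc φ u + 4 / 2 ^ j < Fc φ v) :
    cseq α j ≤ v - u := by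
  have hFu0 : (0:ℝ) ≤ Fc φ u := Fc_nonneg hα hφα u
  have hFv1 : Fc φ v ≤ 1 := Fc_le_one hα hφα v
  have hp : (0:ℝ) < 2 ^ j := by positivity
  set k := ⌊Fc φ u * 2 ^ j⌋₊ + 1 with hk
  have hk1 : Fc φ u * 2 ^ j < k := by
    rw [hk]; push_cast; exact Nat.lt_floor_add_one _
  have hk2 : (k : ℝ) ≤ Fc φ u * 2 ^ j + 1 := by
    rw [hk]; push_cast
    have := Nat.floor_le (by positivity : (0:ℝ) ≤ Fc φ u * 2 ^ j)
    linarith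
  have hd0u : Fc φ u < (k : ℝ) / 2 ^ j := by rw [lt_div_iff₀ hp]; exact hk1
  have hd2v : ((k : ℝ) + 2) / 2 ^ j < Fc φ v := by
    rw [div_lt_iff₀ hp]
    have h4 : (4 / 2 ^ j) * (2:ℝ) ^ j = 4 := by field_simp
    have h5 := mul_lt_mul_of_pos_right hlt hp
    rw [add_mul, h4] at h5
    linarith
  have hk2j : k + 2 < 2 ^ j := by
    have h4 : ((k : ℝ) + 2) < 2 ^ j := by
      rw [div_lt_iff₀ hp] at hd2v
      nlinarith
    exact_mod_cast h4
  obtain ⟨m₀, hm₀1, hm₀2, hm₀3⟩ := grid_idx (show 1 ≤ k by omega) (show k < 2 ^ j by omega)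
  obtain ⟨m₁, hm₁1, hm₁2, hm₁3⟩ := grid_idx (show 1 ≤ k + 1 by omega) (show k + 1 < 2 ^ j by omega)
  obtain ⟨m₂, hm₂1, hm₂2, hm₂3⟩ := grid_idx (show 1 ≤ k + 2 by omega) hk2j
  -- u < G m₀
  have hGm0 : u < PhiFun φ (eDy m₀) + φ (eDy m₀) := by
    refine G_gt_of_gt_Fc hα hφα hm₀1 ?_
    rw [hm₀3]
    exact hd0u
  -- G m₂ ≤ v
  have hGm2 : PhiFun φ (eDy m₂) + φ (eDy m₂) ≤ v := by
    have hlt2 : eDy m₂ < Fc φ v := by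
      rw [hm₂3]
      calc ((k + 2 : ℕ) : ℝ) / 2 ^ j = ((k:ℝ) + 2) / 2 ^ j := by push_cast; ring
        _ < Fc φ v := hd2v
    obtain ⟨y, hy, hylt⟩ := exists_lt_of_lt_csSup (FS_nonempty v) hlt2
    rcases hy with rfl | ⟨hy1, hy2⟩
    · exact absurd hylt (not_lt.2 (eDy_pos hm₂1).le)
    · obtain ⟨n, hn, rfl⟩ := dyadics_surj y hy1
      have h5 := G_le_Phi_of_lt hα hφα hm₂1 hn hylt
      have h6 := (Phi_lt_G hα hφα hn).le
      linarith
  -- the three grid values as reals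
  have hc1 : eDy m₁ = ((k : ℝ) + 1) / 2 ^ j := by rw [hm₁3]; push_cast; ring
  have hc2 : eDy m₂ = ((k : ℝ) + 2) / 2 ^ j := by rw [hm₂3]; push_cast; ring
  have hdlt01 : (k : ℝ) / 2 ^ j < ((k : ℝ) + 1) / 2 ^ j := by
    rw [div_lt_div_iff₀ hp hp]; nlinarith
  have hdlt12 : ((k : ℝ) + 1) / 2 ^ j < ((k : ℝ) + 2) / 2 ^ j := by
    rw [div_lt_div_iff₀ hp hp]; nlinarith
  -- the difference set
  have hsub : {n : ℕ | 1 ≤ n ∧ eDy n ≤ eDy m₀} ⊆ {n : ℕ | 1 ≤ n ∧ eDy n ≤ eDy m₂} := by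
    rintro n ⟨h1, h2⟩
    refine ⟨h1, h2.trans ?_⟩
    rw [hm₀3, hc2]
    linarith
  have hdiff : PhiFun φ (eDy m₂) + φ (eDy m₂) - (PhiFun φ (eDy m₀) + φ (eDy m₀))
      = T α ({n : ℕ | 1 ≤ n ∧ eDy n ≤ eDy m₂} \ {n : ℕ | 1 ≤ n ∧ eDy n ≤ eDy m₀}) := by
    rw [T_diff hα hsub, Phi_add_eq hα hφα hm₀1, Phi_add_eq hα hφα hm₂1]
  -- the inner union
  set A : Set ℕ := cellC j k ∪ ({m₁} ∪ cellC j (k + 1)) with hA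
  have hcell1 : ∀ n ∈ cellC j k, (k:ℝ)/2^j < eDy n ∧ eDy n < ((k:ℝ)+1)/2^j :=
    fun n hn => ⟨hn.2.1, hn.2.2⟩
  have hcell2 : ∀ n ∈ cellC j (k+1), ((k:ℝ)+1)/2^j < eDy n ∧ eDy n < ((k:ℝ)+2)/2^j := by
    rintro n ⟨h1, h2, h3⟩
    constructor
    · calc ((k:ℝ)+1)/2^j = ((k+1 : ℕ):ℝ)/2^j := by push_cast; ring
        _ < eDy n := h2
    · calc eDy n < (((k+1:ℕ):ℝ)+1)/2^j := h3
        _ = ((k:ℝ)+2)/2^j := by push_cast; ring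
  have hdisj1 : Disjoint ({m₁} : Set ℕ) (cellC j (k+1)) := by
    rw [Set.disjoint_left]
    rintro n rfl hmem
    have := (hcell2 n hmem).1
    rw [hc1] at this
    exact lt_irrefl _ this
  have hdisj2 : Disjoint (cellC j k) ({m₁} ∪ cellC j (k+1)) := by
    rw [Set.disjoint_left]
    rintro n hn (h | h)
    · rw [Set.mem_singleton_iff] at h
      subst h
      have h1 := (hcell1 n hn).2
      rw [hc1] at h1
      exact lt_irrefl _ h1
    · have h1 := (hcell1 n hn).2
      have h2 := (hcell2 n h).1
      linarith
  have hTA : T α A = T α (cellC j k) + (α m₁ + T α (cellC j (k+1))) := by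
    rw [hA, T_union hα hdisj2, T_union hα hdisj1, T_singleton hα hm₁1]
  have hAsub : A ⊆ {n : ℕ | 1 ≤ n ∧ eDy n ≤ eDy m₂} \ {n : ℕ | 1 ≤ n ∧ eDy n ≤ eDy m₀} := by
    rintro n hn
    have hbounds : (k:ℝ)/2^j < eDy n ∧ eDy n ≤ ((k:ℝ)+2)/2^j ∧ 1 ≤ n := by
      rcases hn with h | (h | h)
      · exact ⟨(hcell1 n h).1, by linarith [(hcell1 n h).2], h.1⟩
      · rw [Set.mem_singleton_iff] at h
        subst h
        rw [hc1]
        exact ⟨hdlt01, by linarith, hm₁1⟩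
      · exact ⟨by linarith [(hcell2 n h).1], (hcell2 n h).2.le, h.1⟩
    refine ⟨⟨hbounds.2.2, by rw [hc2]; exact hbounds.2.1⟩, ?_⟩
    rintro ⟨h1, h2⟩
    rw [hm₀3] at h2
    linarith [hbounds.1]
  have hkey : T α (cellC j k) + (α m₁ + T α (cellC j (k+1))) ≤ v - u := by
    calc T α (cellC j k) + (α m₁ + T α (cellC j (k+1))) = T α A := hTA.symm
      _ ≤ T α ({n : ℕ | 1 ≤ n ∧ eDy n ≤ eDy m₂} \ {n : ℕ | 1 ≤ n ∧ eDy n ≤ eDy m₀}) :=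
          T_mono hα hAsub
      _ = PhiFun φ (eDy m₂) + φ (eDy m₂) - (PhiFun φ (eDy m₀) + φ (eDy m₀)) := hdiff.symm
      _ ≤ v - u := by linarith
  have hL1 : Ltail α j ≤ T α (cellC j k) := Ltail_le_T_cellC hα hφα (by omega)
  have hL2 : Ltail α j ≤ T α (cellC j (k+1)) := Ltail_le_T_cellC hα hφα (by omega)
  have hαm₁ : α (2 ^ j) ≤ α m₁ := hα.2.1 m₁ (2 ^ j) hm₁1 (by omega)
  have hI1 := I1 hα j
  have hcseq : cseq α j ≤ α (2 ^ j) + 2 * Ltail α j := by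
    rw [cseq, div_le_iff₀ hp]
    calc Rtail α j ≤ 2 ^ j * α (2 ^ j) + 2 ^ (j+1) * Ltail α j := hI1
      _ = (α (2 ^ j) + 2 * Ltail α j) * 2 ^ j := by rw [pow_succ]; ring
  linarith

lemma mu_le_of_diam {s : Set ℝ} {j : ℕ} (hj : 1 ≤ j)
    (hd : Metric.ediam s < ENNReal.ofReal (cseq α j)) :
    (Fst hα hφα).measure s ≤ ENNReal.ofReal (4 / 2 ^ j) := by
  rcases Set.eq_empty_or_nonempty s with rfl | hne
  · simp
  have hb : Bornology.IsBounded s :=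
    Metric.isBounded_iff_ediam_ne_top.2 (by intro h; rw [h] at hd; exact absurd hd (by simp))
  have hdiam : sSup s - sInf s < cseq α j := by
    rw [Real.ediam_eq hb] at hd
    by_contra hcon
    push_neg at hcon
    exact absurd (ENNReal.ofReal_le_ofReal hcon) (not_le.2 hd)
  set u' := sInf s - (cseq α j - (sSup s - sInf s)) / 2 with hu'
  have hui : u' < sInf s := by
    rw [hu']
    linarith
  have hspan : sSup s - u' < cseq α j := by
    rw [hu']
    linarith
  have hsub2 : s ⊆ Set.Ioc u' (sSup s) := by
    intro x hx
    have := hb.subset_Icc_sInf_sSup hx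
    exact ⟨lt_of_lt_of_le hui this.1, this.2⟩
  calc (Fst hα hφα).measure s ≤ (Fst hα hφα).measure (Set.Ioc u' (sSup s)) :=
        measure_mono hsub2
    _ = ENNReal.ofReal (Fc φ (sSup s) - Fc φ u') := muK_Ioc hα hφα _ _
    _ ≤ ENNReal.ofReal (4 / 2 ^ j) := by
        refine ENNReal.ofReal_le_ofReal ?_
        by_contra hcon
        push_neg at hcon
        have := F_count hα hφα hj (by linarith : Fc φ u' + 4 / 2 ^ j < Fc φ (sSup s))
        linarith

lemma frostman_pointwise {s : Set ℝ} (hd : Metric.ediam s ≤ ENNReal.ofReal (cseq α 1 / 2)) :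
    ENNReal.ofReal (1/8) * (Fst hα hφα).measure s
      ≤ ENNReal.ofReal (hGauge α (Metric.ediam s).toReal) := by
  set x := (Metric.ediam s).toReal with hx
  have hc1 := cseq_pos hα 1
  have hdne : Metric.ediam s ≠ ⊤ := by
    intro h
    rw [h] at hd
    exact absurd (lt_of_le_of_lt hd ENNReal.ofReal_lt_top) (lt_irrefl _)
  have hdeq : Metric.ediam s = ENNReal.ofReal x := by rw [hx, ENNReal.ofReal_toReal hdne]
  have hx0 : (0:ℝ) ≤ x := ENNReal.toReal_nonneg
  have hxle : x ≤ cseq α 1 / 2 := by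
    rw [hx]
    exact ENNReal.toReal_le_of_le_ofReal (by linarith) hd
  have hx1 : x < cseq α 1 := by linarith
  by_cases hall : ∀ j : ℕ, 1 ≤ j → x < cseq α j
  · have h0 : (Fst hα hφα).measure s = 0 := by
      have hb : ∀ j : ℕ, 1 ≤ j → (Fst hα hφα).measure s ≤ ENNReal.ofReal (4 / 2 ^ j) := by
        intro j hj
        refine mu_le_of_diam hα hφα hj ?_
        rw [hdeq]
        exact (ENNReal.ofReal_lt_ofReal_iff (cseq_pos hα j)).2 (hall j hj)
      refine le_antisymm ?_ (zero_le)
      have htend : Tendsto (fun j : ℕ => ENNReal.ofReal (4 / 2 ^ j)) atTop (𝓝 0) := by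
        have h1 : Tendsto (fun j : ℕ => (4:ℝ) / 2 ^ j) atTop (𝓝 0) := by
          have h2 := tendsto_pow_atTop_nhds_zero_of_lt_one
            (by norm_num : (0:ℝ) ≤ 1/2) (by norm_num : (1/2:ℝ) < 1)
          have h3 : Tendsto (fun j : ℕ => (4:ℝ) * (1/2) ^ j) atTop (𝓝 (4 * 0)) :=
            h2.const_mul 4
          rw [mul_zero] at h3
          refine h3.congr fun j => ?_
          rw [div_pow, one_pow]
          ring
        have := ENNReal.tendsto_ofReal h1
        simpa using this
      exact ge_of_tendsto htend
        (by filter_upwards [eventually_ge_atTop 1] with j hj using hb j hj)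
    rw [h0, mul_zero]
    exact zero_le
  · push_neg at hall
    obtain ⟨j₀, hj₀1, hj₀2⟩ := hall
    have hQ : ∃ t : ℕ, cseq α (t + 1) ≤ x := ⟨j₀ - 1, by
      have : j₀ - 1 + 1 = j₀ := by omega
      rw [this]
      exact hj₀2⟩
    classical
    set js := Nat.find hQ with hjs
    have hjsQ : cseq α (js + 1) ≤ x := Nat.find_spec hQ
    have hjs1 : 1 ≤ js := by
      by_contra hcon
      push_neg at hcon
      interval_cases js
      · exact absurd hjsQ (not_le.2 hx1)
    have hjslt : x < cseq α js := by
      have := Nat.find_min hQ (m := js - 1) (by omega)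
      push_neg at this
      have heq : js - 1 + 1 = js := by omega
      rw [heq] at this
      exact this
    have hmu : (Fst hα hφα).measure s ≤ ENNReal.ofReal (4 / 2 ^ js) := by
      refine mu_le_of_diam hα hφα hjs1 ?_
      rw [hdeq]
      exact (ENNReal.ofReal_lt_ofReal_iff (cseq_pos hα js)).2 hjslt
    have hgauge : ((2:ℝ) ^ (js + 1))⁻¹ ≤ hGauge α x := hGauge_ge hα hjsQ
    calc ENNReal.ofReal (1/8) * (Fst hα hφα).measure s
        ≤ ENNReal.ofReal (1/8) * ENNReal.ofReal (4 / 2 ^ js) := by gcongr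
      _ = ENNReal.ofReal ((1/8) * (4 / 2 ^ js)) := (ENNReal.ofReal_mul (by norm_num)).symm
      _ = ENNReal.ofReal (((2:ℝ) ^ (js + 1))⁻¹) := by
          congr 1
          rw [pow_succ]
          field_simp
          ring
      _ ≤ ENNReal.ofReal (hGauge α x) := ENNReal.ofReal_le_ofReal hgauge

lemma lower_bound : ENNReal.ofReal (1/8)
    ≤ Measure.mkMetric (fun d : ℝ≥0∞ => ENNReal.ofReal (hGauge α d.toReal)) (Kset φ) := by
  have hmeas : (ENNReal.ofReal (1/8) • (Fst hα hφα).measure)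
      ≤ Measure.mkMetric (fun d : ℝ≥0∞ => ENNReal.ofReal (hGauge α d.toReal)) := by
    refine Measure.le_mkMetric _ _ (ENNReal.ofReal (cseq α 1 / 2)) ?_ ?_
    · rw [ENNReal.ofReal_pos]
      linarith [cseq_pos hα 1]
    · intro s hs
      rw [Measure.smul_apply, smul_eq_mul]
      exact frostman_pointwise hα hφα hs
  have hle := Measure.le_iff'.1 hmeas (Kset φ)
  rw [Measure.smul_apply, smul_eq_mul] at hle
  calc ENNReal.ofReal (1/8) = ENNReal.ofReal (1/8) * 1 := (mul_one _).symm
    _ ≤ ENNReal.ofReal (1/8) * (Fst hα hφα).measure (Kset φ) :=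
        by gcongr; exact muK_Kset hα hφα
    _ ≤ _ := hle

lemma upper_bound :
    Measure.mkMetric (fun d : ℝ≥0∞ => ENNReal.ofReal (hGauge α d.toReal)) (Kset φ) ≤ 1 := by
  classical
  let m : ℝ≥0∞ → ℝ≥0∞ := fun d => ENNReal.ofReal (hGauge α d.toReal)
  let t : ℕ → ℕ → Set ℝ :=
    fun j s => if s < 2 ^ j then Set.Icc (aEnd α j s) (bEnd α j s) else ∅
  have hm : ∀ d, m d = ENNReal.ofReal (hGauge α d.toReal) := fun _ => rfl
  have ht : ∀ j s, t j s = if s < 2 ^ j then Set.Icc (aEnd α j s) (bEnd α j s) else ∅ :=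
    fun _ _ => rfl
  have hlen : ∀ j s, s < 2 ^ j → bEnd α j s - aEnd α j s ≤ Rtail α j := by
    intro j s _
    rw [bEnd_sub_aEnd hα hφα]
    exact T_mono hα (cellC_subset j s)
  have hcov := Measure.mkMetric_le_liminf_tsum (Kset φ)
    (fun j => ENNReal.ofReal (Rtail α j))
    (by simpa using ENNReal.tendsto_ofReal (Rtail_tendsto hα))
    t
    (by
      refine Filter.Eventually.of_forall fun j => fun s => ?_
      rw [ht j s]
      by_cases hs : s < 2 ^ j
      · simp only [if_pos hs]
        rw [Real.ediam_Icc]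
        exact ENNReal.ofReal_le_ofReal (hlen j s hs)
      · simp only [if_neg hs, Metric.ediam_empty]
        exact zero_le)
    (by
      filter_upwards [eventually_ge_atTop 1] with j hj
      intro x hx
      have := cover_lemma hα hφα j hj (by norm_num) hx
      rw [Set.mem_iUnion₂] at this
      obtain ⟨s, hs, hmem⟩ := this
      rw [Set.mem_iUnion]
      exact ⟨s, by rw [ht j s]; simp only [if_pos (Finset.mem_range.1 hs)]; exact hmem⟩)
    m
  refine le_trans hcov ?_
  have hsum : ∀ j : ℕ, 1 ≤ j → (∑' s : ℕ, m (Metric.ediam (t j s))) ≤ 1 := by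
    intro j hj
    have hzero : ∀ s ∉ Finset.range (2 ^ j), m (Metric.ediam (t j s)) = 0 := by
      intro s hs
      rw [Finset.mem_range] at hs
      rw [ht j s]
      simp only [if_neg hs]
      rw [Metric.ediam_empty, hm 0]
      simp only [ENNReal.toReal_zero]
      rw [hGauge_zero hα, ENNReal.ofReal_zero]
    rw [tsum_eq_sum hzero]
    have hterm : ∀ s ∈ Finset.range (2 ^ j), m (Metric.ediam (t j s))
        = ENNReal.ofReal (hGauge α (bEnd α j s - aEnd α j s)) := by
      intro s hs
      rw [Finset.mem_range] at hs
      rw [ht j s]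
      simp only [if_pos hs]
      rw [Real.ediam_Icc, hm _]
      congr 1
      rw [ENNReal.toReal_ofReal (by linarith [aEnd_le_bEnd hα hφα j s])]
    rw [Finset.sum_congr rfl hterm]
    have hnn : ∀ s ∈ Finset.range (2 ^ j), 0 ≤ hGauge α (bEnd α j s - aEnd α j s) := by
      intro s _
      exact hGauge_nonneg hα (by linarith [aEnd_le_bEnd hα hφα j s])
    rw [← ENNReal.ofReal_sum_of_nonneg hnn]
    refine ENNReal.ofReal_le_ofReal ?_ |>.trans (by rw [ENNReal.ofReal_one])
    -- real inequality
    have hstep1 : ∀ s ∈ Finset.range (2 ^ j), hGauge α (bEnd α j s - aEnd α j s)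
        ≤ lineF α j (bEnd α j s - aEnd α j s) := by
      intro s _
      exact hGauge_le_lineF hα (by linarith [aEnd_le_bEnd hα hφα j s]) j
    have hstep2 : ∑ s ∈ Finset.range (2 ^ j), lineF α j (bEnd α j s - aEnd α j s) ≤ 1 := by
      have hcard : ((Finset.range (2 ^ j)).card : ℝ) = 2 ^ j := by
        rw [Finset.card_range]; push_cast; ring
      have hexp : ∑ s ∈ Finset.range (2 ^ j), lineF α j (bEnd α j s - aEnd α j s)
          = 2 ^ j * ((2:ℝ) ^ j)⁻¹ + Bslope α j *
            ((∑ s ∈ Finset.range (2 ^ j), (bEnd α j s - aEnd α j s)) - 2 ^ j * cseq α j) := by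
        unfold lineF
        rw [Finset.sum_add_distrib, Finset.sum_const, nsmul_eq_mul, Finset.card_range,
          ← Finset.mul_sum, Finset.sum_sub_distrib, Finset.sum_const, nsmul_eq_mul,
          Finset.card_range]
        push_cast
        ring
      have hsumlen : ∑ s ∈ Finset.range (2 ^ j), (bEnd α j s - aEnd α j s) ≤ Rtail α j := by
        calc ∑ s ∈ Finset.range (2 ^ j), (bEnd α j s - aEnd α j s)
            = ∑ s ∈ Finset.range (2 ^ j), T α (cellC j s) :=
              Finset.sum_congr rfl fun s _ => bEnd_sub_aEnd hα hφα j s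
          _ ≤ Rtail α j := sum_T_cells_le hα hφα j
      have hRc : 2 ^ j * cseq α j = Rtail α j := by
        rw [cseq]
        field_simp
      have hB := Bslope_pos hα j
      rw [hexp, hRc]
      have h2 : (2:ℝ) ^ j * ((2:ℝ) ^ j)⁻¹ = 1 := by
        field_simp
      nlinarith
    calc ∑ s ∈ Finset.range (2 ^ j), hGauge α (bEnd α j s - aEnd α j s)
        ≤ ∑ s ∈ Finset.range (2 ^ j), lineF α j (bEnd α j s - aEnd α j s) :=
          Finset.sum_le_sum hstep1
      _ ≤ 1 := hstep2
  calc Filter.liminf (fun j : ℕ => ∑' s : ℕ, m (Metric.ediam (t j s))) atTop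
      ≤ Filter.liminf (fun _ : ℕ => (1 : ℝ≥0∞)) atTop := by
        refine Filter.liminf_le_liminf ?_
        filter_upwards [eventually_ge_atTop 1] with j hj using hsum j hj
    _ = 1 := Filter.liminf_const 1

end WithAll3

end Phi

end Sums

end Stmt6

/-- For every `α ∈ 𝒟𝒮`, the set `K_α` is `ℋ`-visible: there is a gauge
`h ∈ ℋ` (continuous, nondecreasing, `h 0 = 0`) with `0 < μ^h(K_α) < ∞`. -/
theorem stmt_6 (α : ℕ → ℝ) (hα : IsGapSeq α) (φ : ℝ → ℝ) (hφ : IsGapFun φ)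
    (hφα : IsGapFunOf α φ) :
    ∃ h : ℝ → ℝ, h 0 = 0 ∧ ContinuousOn h (Set.Ici 0) ∧ MonotoneOn h (Set.Ici 0) ∧
      (∀ x ∈ Set.Ici (0 : ℝ), 0 ≤ h x) ∧
      0 < hausdorffGaugeMeasure h (Kset φ) ∧ hausdorffGaugeMeasure h (Kset φ) < ⊤ := by
  refine ⟨Stmt6.hGauge α, Stmt6.hGauge_zero hα, Stmt6.hGauge_continuousOn hα,
    Stmt6.hGauge_monotoneOn hα, fun x hx => Stmt6.hGauge_nonneg hα (Set.mem_Ici.1 hx), ?_, ?_⟩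
  · calc (0:ℝ≥0∞) < ENNReal.ofReal (1/8) := by
          rw [ENNReal.ofReal_pos]; norm_num
      _ ≤ hausdorffGaugeMeasure (Stmt6.hGauge α) (Kset φ) := Stmt6.lower_bound hα hφα
  · exact lt_of_le_of_lt (Stmt6.upper_bound hα hφα) (by norm_num)
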